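/- arXiv:0803.2848 — 5 statements merged into one kernel-verified Lean document; each statement's English description precedes it below -/
import Mathlib

section
/- Let Z := 2·∑_{x=0}^∞ ∏_{z=1}^{x} w(−z)/w(z) and ρ(x) := Z⁻¹·∏_{z=1}^{⌊|2x+1|/2⌋} w(−z)/w(z) for x ∈ ℤ. Then Z < ∞, ρ is a probability distribution on ℤ (∑_{x∈ℤ} ρ(x) = 1), and ρ is the unique stationary distribution of the Markov kernel P, i.e. ∑_{x∈ℤ} ρ(x)·P(x,y) = ρ(y) for all y ∈ ℤ, and any probability distribution π on ℤ with ∑_x π(x)P(x,y) = π(y) for all y equals ρ. -/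
open MeasureTheory Filter
open scoped BigOperators ENNReal

noncomputable section

/-- `p(x) = w(-x)/(w(x)+w(-x))`. -/
def pfun (w : ℤ → ℝ) (x : ℤ) : ℝ := w (-x) / (w x + w (-x))

/-- `q(x) = w(x)/(w(x)+w(-x))`. -/
def qfun (w : ℤ → ℝ) (x : ℤ) : ℝ := w x / (w x + w (-x))

/-- The Markov transition kernel `P(x,y)`. -/
def Pker (w : ℤ → ℝ) (x y : ℤ) : ℝ :=
  if x - 1 ≤ y then (∏ z ∈ Finset.Icc x y, pfun w z) * qfun w (y + 1) else 0

/-- The `m`-step transition kernel. -/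
def Pm (w : ℤ → ℝ) : ℕ → ℤ → ℤ → ℝ
  | 0, x, y => if x = y then 1 else 0
  | m + 1, x, y => ∑' z : ℤ, Pm w m x z * Pker w z y

/-- The normalizing constant `Z`. -/
def Zconst (w : ℤ → ℝ) : ℝ :=
  2 * ∑' x : ℕ, ∏ z ∈ Finset.Icc (1 : ℤ) (x : ℤ), w (-z) / w z

/-- The stationary distribution `ρ`. -/
def rho (w : ℤ → ℝ) (x : ℤ) : ℝ :=
  (Zconst w)⁻¹ * ∏ z ∈ Finset.Icc (1 : ℤ) (|2 * x + 1| / 2), w (-z) / w z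

/-- The weight function `w` is positive, nondecreasing and satisfies
`lim_{z→∞} (w(z) - w(-z)) > 0`. -/
def GoodWeight (w : ℤ → ℝ) : Prop :=
  (∀ z, 0 < w z) ∧ (∀ z, w z ≤ w (z + 1)) ∧
    ∃ c > (0 : ℝ), ∀ᶠ z : ℤ in atTop, c ≤ w z - w (-z)

/-- `η` is a Markov chain with (sub)stochastic kernel `K` started at `a`,
characterized through its cylinder probabilities. -/
def KChain {Ω : Type*} [MeasurableSpace Ω] (μ : Measure Ω)
    (K : ℤ → ℤ → ℝ) (η : ℕ → Ω → ℤ) (a : ℤ) : Prop :=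
  (∀ n, Measurable (η n)) ∧
  ∀ (n : ℕ) (x : ℕ → ℤ),
    μ {ω | ∀ i ≤ n, η i ω = x i} =
      ENNReal.ofReal ((if x 0 = a then (1 : ℝ) else 0) *
        ∏ i ∈ Finset.range n, K (x i) (x (i + 1)))

open scoped Topology

set_option linter.unusedSectionVars false

namespace SP
variable {w : ℤ → ℝ}

/-- `R x = ∏_{z=1}^x w(-z)/w(z)`. -/
def R (w : ℤ → ℝ) (x : ℤ) : ℝ := ∏ z ∈ Finset.Icc (1 : ℤ) x, w (-z) / w z

lemma Icc_succ_top {a b : ℤ} (h : a ≤ b + 1) :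
    Finset.Icc a (b + 1) = insert (b + 1) (Finset.Icc a b) := by
  ext t; simp only [Finset.mem_Icc, Finset.mem_insert]; omega

lemma prod_Icc_succ_top' {a b : ℤ} (h : a ≤ b + 1) (f : ℤ → ℝ) :
    ∏ z ∈ Finset.Icc a (b + 1), f z = (∏ z ∈ Finset.Icc a b, f z) * f (b + 1) := by
  rw [Icc_succ_top h, Finset.prod_insert (by simp), mul_comm]

section
variable (hw : GoodWeight w)
include hw

lemma wpos : ∀ z, 0 < w z := hw.1
lemma wmono : Monotone w := monotone_int_of_le_succ hw.2.1
lemma denom_pos (x : ℤ) : 0 < w x + w (-x) := add_pos (hw.1 x) (hw.1 (-x))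
lemma qpos (x : ℤ) : 0 < qfun w x := div_pos (hw.1 x) (denom_pos hw x)
lemma ppos (x : ℤ) : 0 < pfun w x := div_pos (hw.1 (-x)) (denom_pos hw x)
lemma pq_sum (x : ℤ) : pfun w x + qfun w x = 1 := by
  rw [pfun, qfun, ← add_div, add_comm, div_self (denom_pos hw x).ne']
lemma p_lt_one (x : ℤ) : pfun w x < 1 := by
  have := qpos hw x; have := pq_sum hw x; linarith
lemma p_le_one (x : ℤ) : pfun w x ≤ 1 := (p_lt_one hw x).le
lemma q_lt_one (x : ℤ) : qfun w x < 1 := by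
  have := ppos hw x; have := pq_sum hw x; linarith

lemma R_pos (x : ℤ) : 0 < R w x :=
  Finset.prod_pos fun z _ => div_pos (hw.1 (-z)) (hw.1 z)

lemma R_succ {x : ℤ} (h : 0 ≤ x) :
    R w (x + 1) = R w x * (w (-(x + 1)) / w (x + 1)) :=
  prod_Icc_succ_top' (by omega) _

lemma rho_of_nonneg {x : ℤ} (h : 0 ≤ x) : rho w x = (Zconst w)⁻¹ * R w x := by
  have h1 : |2 * x + 1| / 2 = x := by rw [abs_of_nonneg (by omega)]; omega
  rw [rho, h1]; rfl

lemma rho_of_neg {x : ℤ} (h : x < 0) : rho w x = (Zconst w)⁻¹ * R w (-x - 1) := by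
  have h1 : |2 * x + 1| / 2 = -x - 1 := by rw [abs_of_nonpos (by omega)]; omega
  rw [rho, h1]; rfl

end
end SP

set_option linter.unusedSectionVars false

namespace SP
variable {w : ℤ → ℝ}
section
variable (hw : GoodWeight w)
include hw

lemma exists_theta : ∃ z₀ : ℤ, 1 ≤ z₀ ∧ ∃ θ : ℝ, 0 ≤ θ ∧ θ < 1 ∧
    ∀ z, z₀ ≤ z → w (-z) / w z ≤ θ := by
  obtain ⟨c, hc, hev⟩ := hw.2.2
  obtain ⟨z₁, hz₁⟩ := eventually_atTop.mp hev
  refine ⟨max z₁ 1, le_max_right _ _, w (-(max z₁ 1)) / w (max z₁ 1), ?_, ?_, ?_⟩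
  · exact le_of_lt (div_pos (hw.1 _) (hw.1 _))
  · rw [div_lt_one (hw.1 _)]
    have := hz₁ (max z₁ 1) (le_max_left _ _); linarith
  · intro z hz
    exact div_le_div₀ (le_of_lt (hw.1 _)) (wmono hw (by omega)) (hw.1 _) (wmono hw hz)

lemma summable_r : Summable (fun x : ℕ => ∏ z ∈ Finset.Icc (1 : ℤ) (x : ℤ), w (-z) / w z) := by
  obtain ⟨z₀, hz₀, θ, hθ0, hθ1, hθ⟩ := exists_theta hw
  apply summable_of_ratio_norm_eventually_le hθ1
  filter_upwards [eventually_ge_atTop z₀.toNat] with n hn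
  have hcast : ((n + 1 : ℕ) : ℤ) = (n : ℤ) + 1 := by push_cast; ring
  have h0 : (0 : ℤ) ≤ (n : ℤ) := Int.ofNat_nonneg n
  have h1 : z₀ ≤ (n : ℤ) + 1 := by omega
  have key : (∏ z ∈ Finset.Icc (1 : ℤ) ((n : ℤ) + 1), w (-z) / w z)
      = (∏ z ∈ Finset.Icc (1 : ℤ) (n : ℤ), w (-z) / w z) * (w (-((n:ℤ)+1)) / w ((n:ℤ)+1)) :=
    prod_Icc_succ_top' (by omega) _
  have h3 : (0:ℝ) ≤ ∏ z ∈ Finset.Icc (1:ℤ) (n:ℤ), w (-z) / w z := (R_pos hw _).le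
  have h4 : (0:ℝ) ≤ (∏ z ∈ Finset.Icc (1:ℤ) (n:ℤ), w (-z) / w z) * (w (-((n:ℤ)+1)) / w ((n:ℤ)+1)) :=
    mul_nonneg h3 (div_pos (hw.1 _) (hw.1 _)).le
  rw [Real.norm_eq_abs, Real.norm_eq_abs, hcast, key, abs_of_nonneg h4, abs_of_nonneg h3]
  calc (∏ z ∈ Finset.Icc (1 : ℤ) (n : ℤ), w (-z) / w z) * (w (-((n:ℤ)+1)) / w ((n:ℤ)+1))
      ≤ (∏ z ∈ Finset.Icc (1 : ℤ) (n : ℤ), w (-z) / w z) * θ :=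
        mul_le_mul_of_nonneg_left (hθ _ h1) (R_pos hw (n:ℤ)).le
    _ = θ * _ := mul_comm _ _

lemma tsum_r_pos : 0 < ∑' x : ℕ, ∏ z ∈ Finset.Icc (1 : ℤ) (x : ℤ), w (-z) / w z :=
  Summable.tsum_pos (summable_r hw) (fun i => (R_pos hw _).le) 0 (R_pos hw 0)

lemma Zpos : 0 < Zconst w := by
  have := tsum_r_pos hw; rw [Zconst]; linarith

lemma rho_ratio (x : ℤ) : rho w (x + 1) * w (x + 1) = rho w x * w (-(x + 1)) := by
  rcases le_or_gt 0 x with hx | hx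
  · have hZ := (Zpos hw).ne'
    have hww := (hw.1 (x+1)).ne'
    rw [rho_of_nonneg hw (by omega), rho_of_nonneg hw hx, R_succ hw hx]
    field_simp
  · rcases eq_or_lt_of_le (by omega : x ≤ -1) with hx1 | hx1
    · subst hx1  -- wrong direction maybe
      norm_num [rho_of_nonneg hw, rho_of_neg hw]
    · have h2 : x + 1 < 0 := by omega
      rw [rho_of_neg hw hx, rho_of_neg hw h2]
      have key : R w (-x - 1) = R w (-x - 2) * (w (x + 1) / w (-x - 1)) := by
        have h5 := R_succ hw (x := -x - 2) (by omega)
        rw [show -x - 2 + 1 = -x - 1 by ring, show -(-x - 1) = x + 1 by ring] at h5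
        exact h5
      rw [show -(x+1) - 1 = -x - 2 by ring, show -(x + 1) = -x - 1 by ring, key]
      have h6 := (hw.1 (-x - 1)).ne'
      field_simp

lemma rho_pos (x : ℤ) : 0 < rho w x := by
  rcases le_or_gt 0 x with hx | hx
  · rw [rho_of_nonneg hw hx]; exact mul_pos (inv_pos.mpr (Zpos hw)) (R_pos hw _)
  · rw [rho_of_neg hw hx]; exact mul_pos (inv_pos.mpr (Zpos hw)) (R_pos hw _)

end
end SP

namespace SP
variable {w : ℤ → ℝ}
section
variable (hw : GoodWeight w)
include hw

lemma hasSum_rho : HasSum (rho w) 1 := by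
  have hr := (summable_r hw).hasSum
  set S := ∑' x : ℕ, ∏ z ∈ Finset.Icc (1 : ℤ) (x : ℤ), w (-z) / w z with hS
  have hZ : Zconst w = 2 * S := rfl
  have h1 : HasSum (fun n : ℕ => rho w (n : ℤ)) ((Zconst w)⁻¹ * S) := by
    have := hr.mul_left (Zconst w)⁻¹
    refine this.congr_fun fun n => ?_
    rw [rho_of_nonneg hw (Int.ofNat_nonneg n)]; rfl
  have h2 : HasSum (fun n : ℕ => rho w (-((n : ℤ) + 1))) ((Zconst w)⁻¹ * S) := by
    have := hr.mul_left (Zconst w)⁻¹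
    refine this.congr_fun fun n => ?_
    rw [rho_of_neg hw (by omega), show -(-((n:ℤ)+1)) - 1 = (n:ℤ) by ring]; rfl
  have h3 := HasSum.of_nat_of_neg_add_one h1 h2
  have h4 : (Zconst w)⁻¹ * S + (Zconst w)⁻¹ * S = 1 := by
    have hZ0 := (Zpos hw).ne'
    rw [hZ] at hZ0 ⊢
    field_simp
    have hS0 : S ≠ 0 := fun h => hZ0 (by rw [h, mul_zero])
    rw [mul_div_right_comm, div_self hS0]; norm_num
  rwa [h4] at h3

lemma T_rec (a : ℤ) :
    rho w a / qfun w (a + 1) = rho w (a + 1) + pfun w a * (rho w (a - 1) / qfun w a) := by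
  have h1 := rho_ratio hw a
  have h2 := rho_ratio hw (a - 1)
  rw [show a - 1 + 1 = a by ring] at h2
  have hwa := (hw.1 a).ne'
  have hwa1 := (hw.1 (a + 1)).ne'
  have hwna := (hw.1 (-a)).ne'
  have hwna1 := (hw.1 (-(a + 1))).ne'
  have hDa := (denom_pos hw a).ne'
  have hDa1 := (denom_pos hw (a + 1)).ne'
  have e1 : rho w a / qfun w (a + 1) = rho w a + rho w (a + 1) := by
    rw [qfun, div_div_eq_mul_div, div_eq_iff hwa1]
    linear_combination -h1
  have e2 : pfun w a * (rho w (a - 1) / qfun w a) = rho w a := by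
    rw [pfun, qfun, div_div_eq_mul_div]
    field_simp
    linear_combination -h2
  rw [e1, e2]
  ring

end
end SP

namespace SP
variable {w : ℤ → ℝ}

lemma Icc_insert_bot {a b : ℤ} (h : a ≤ b) :
    Finset.Icc a b = insert a (Finset.Icc (a + 1) b) := by
  ext t; simp only [Finset.mem_Icc, Finset.mem_insert]; omega

lemma prod_Icc_insert_bot {a b : ℤ} (h : a ≤ b) (f : ℤ → ℝ) :
    ∏ z ∈ Finset.Icc a b, f z = f a * ∏ z ∈ Finset.Icc (a + 1) b, f z := by
  rw [Icc_insert_bot h, Finset.prod_insert (by simp)]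

section
variable (hw : GoodWeight w)
include hw

lemma T_le {a : ℤ} (ha : a ≤ -2) :
    rho w a / qfun w (a + 1) ≤ 2 * (Zconst w)⁻¹ * R w (-a - 2) := by
  have h1 : rho w a = (Zconst w)⁻¹ * R w (-a - 1) := rho_of_neg hw (by omega)
  have h2 : R w (-a - 1) = R w (-a - 2) * (w (a + 1) / w (-a - 1)) := by
    have h5 := R_succ hw (x := -a - 2) (by omega)
    rw [show -a - 2 + 1 = -a - 1 by ring] at h5
    rw [show -(-a - 1) = a + 1 by ring] at h5
    exact h5
  have hq := (hw.1 (a + 1)).ne'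
  have hq2 := (hw.1 (-a - 1)).ne'
  have hD : w (a + 1) + w (-a - 1) ≠ 0 := (add_pos (hw.1 _) (hw.1 _)).ne'
  have e : rho w a / qfun w (a + 1)
      = (Zconst w)⁻¹ * R w (-a - 2) * ((w (a + 1) + w (-a - 1)) / w (-a - 1)) := by
    rw [div_eq_iff (qpos hw (a + 1)).ne', h1, h2, qfun, show -(a + 1) = -a - 1 by ring]
    field_simp
  rw [e]
  have hb : (w (a + 1) + w (-a - 1)) / w (-a - 1) ≤ 2 := by
    rw [div_le_iff₀ (hw.1 (-a - 1))]
    have := wmono hw (show a + 1 ≤ -a - 1 by omega)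
    linarith
  have hnn : 0 ≤ (Zconst w)⁻¹ * R w (-a - 2) :=
    (mul_pos (inv_pos.mpr (Zpos hw)) (R_pos hw _)).le
  calc (Zconst w)⁻¹ * R w (-a - 2) * ((w (a + 1) + w (-a - 1)) / w (-a - 1))
      ≤ (Zconst w)⁻¹ * R w (-a - 2) * 2 := mul_le_mul_of_nonneg_left hb hnn
    _ = 2 * (Zconst w)⁻¹ * R w (-a - 2) := by ring

lemma T_tendsto : Tendsto (fun a : ℤ => rho w a / qfun w (a + 1)) atBot (𝓝 0) := by
  have hu : Tendsto (fun m : ℕ => 2 * (Zconst w)⁻¹ * R w (m : ℤ)) atTop (𝓝 (2 * (Zconst w)⁻¹ * 0)) :=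
    ((summable_r hw).tendsto_atTop_zero).const_mul _
  rw [mul_zero] at hu
  have hmap : Tendsto (fun a : ℤ => (-a - 2).toNat) atBot atTop := by
    apply tendsto_atTop.mpr; intro b
    filter_upwards [eventually_le_atBot (-(b : ℤ) - 2)] with a ha
    omega
  apply squeeze_zero' (g := fun a : ℤ => 2 * (Zconst w)⁻¹ * R w (((-a - 2).toNat : ℕ) : ℤ))
  · exact Eventually.of_forall fun a => (div_pos (rho_pos hw a) (qpos hw _)).le
  · filter_upwards [eventually_le_atBot (-2 : ℤ)] with a ha
    have hc : (((-a - 2).toNat : ℕ) : ℤ) = -a - 2 := by omega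
    rw [hc]
    exact T_le hw ha
  · exact hu.comp hmap

lemma SN_eq (y : ℤ) (N : ℕ) :
    ∑ n ∈ Finset.range N, rho w (y + 1 - n) * ∏ z ∈ Finset.Icc (y + 1 - (n : ℤ)) y, pfun w z
      = rho w y / qfun w (y + 1)
        - rho w (y - N) / qfun w (y - N + 1) * ∏ z ∈ Finset.Icc (y + 1 - (N : ℤ)) y, pfun w z := by
  induction N with
  | zero =>
    simp [Finset.Icc_eq_empty (by omega : ¬ (y + 1 - (0:ℤ) ≤ y))]
  | succ N ih =>
    rw [Finset.sum_range_succ, ih]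
    have hc1 : ((N + 1 : ℕ) : ℤ) = (N : ℤ) + 1 := by push_cast; ring
    rw [hc1, show y + 1 - ((N : ℤ) + 1) = y - N by ring,
      prod_Icc_insert_bot (show y - (N : ℤ) ≤ y by omega), show y - (N : ℤ) + 1 = y + 1 - N by ring]
    have hT := T_rec hw (y - (N : ℤ))
    rw [show y - (N : ℤ) + 1 = y + 1 - N by ring, show y - (N : ℤ) - 1 = y - ((N : ℤ) + 1) by ring] at hT
    rw [show y - ((N:ℤ) + 1) + 1 = y - N by ring]
    rw [hT]
    ring

end
end SP

namespace SP
variable {w : ℤ → ℝ}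
section
variable (hw : GoodWeight w)
include hw

lemma Pker_nonneg (x y : ℤ) : 0 ≤ Pker w x y := by
  rw [Pker]
  split_ifs
  · exact mul_nonneg (Finset.prod_nonneg fun z _ => (ppos hw z).le) (qpos hw _).le
  · exact le_refl 0

lemma prod_p_le_one (s : Finset ℤ) : ∏ z ∈ s, pfun w z ≤ 1 :=
  Finset.prod_le_one (fun z _ => (ppos hw z).le) (fun z _ => p_le_one hw z)

lemma stationary (y : ℤ) : HasSum (fun x : ℤ => rho w x * Pker w x y) (rho w y) := by
  have hinj : Function.Injective (fun n : ℕ => y + 1 - (n : ℤ)) := by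
    intro a b h
    simp only at h
    omega
  have hzero : ∀ x : ℤ, x ∉ Set.range (fun n : ℕ => y + 1 - (n : ℤ)) →
      rho w x * Pker w x y = 0 := by
    intro x hx
    have hgt : y + 1 < x := by
      by_contra h
      exact hx ⟨(y + 1 - x).toNat, by simp only; omega⟩
    rw [Pker, if_neg (by omega), mul_zero]
  rw [← Function.Injective.hasSum_iff hinj hzero]
  have h0 : ∀ n : ℕ, 0 ≤ ((fun x : ℤ => rho w x * Pker w x y) ∘ fun n : ℕ => y + 1 - (n : ℤ)) n :=
    fun n => mul_nonneg (rho_pos hw _).le (Pker_nonneg hw _ _)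
  rw [hasSum_iff_tendsto_nat_of_nonneg h0]
  have hsum_eq : ∀ N : ℕ,
      ∑ n ∈ Finset.range N, ((fun x : ℤ => rho w x * Pker w x y) ∘ fun n : ℕ => y + 1 - (n : ℤ)) n
      = (rho w y / qfun w (y + 1)
          - rho w (y - N) / qfun w (y - N + 1) * ∏ z ∈ Finset.Icc (y + 1 - (N : ℤ)) y, pfun w z)
        * qfun w (y + 1) := by
    intro N
    rw [← SN_eq hw y N, Finset.sum_mul]
    refine Finset.sum_congr rfl fun n _ => ?_
    simp only [Function.comp]
    rw [Pker, if_pos (by omega)]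
    ring
  have hg : Tendsto (fun N : ℕ => rho w (y - N) / qfun w (y - N + 1)
      * ∏ z ∈ Finset.Icc (y + 1 - (N : ℤ)) y, pfun w z) atTop (𝓝 0) := by
    apply squeeze_zero'
      (g := fun N : ℕ => rho w (y - N) / qfun w (y - N + 1))
    · exact Eventually.of_forall fun N => (mul_pos (div_pos (rho_pos hw _) (qpos hw _))
        (Finset.prod_pos fun z _ => ppos hw z)).le
    · refine Eventually.of_forall fun N => ?_
      calc rho w (y - N) / qfun w (y - N + 1) * ∏ z ∈ Finset.Icc (y + 1 - (N : ℤ)) y, pfun w z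
          ≤ rho w (y - N) / qfun w (y - N + 1) * 1 :=
            mul_le_mul_of_nonneg_left (prod_p_le_one hw _)
              (div_pos (rho_pos hw _) (qpos hw _)).le
        _ = rho w (y - N) / qfun w (y - N + 1) := mul_one _
    · refine (T_tendsto hw).comp ?_
      apply tendsto_atBot.mpr
      intro b
      filter_upwards [eventually_ge_atTop (y - b).toNat] with N hN
      show y - (N : ℤ) ≤ b
      omega
  have hfinal : Tendsto (fun N : ℕ => (rho w y / qfun w (y + 1)
      - rho w (y - N) / qfun w (y - N + 1) * ∏ z ∈ Finset.Icc (y + 1 - (N : ℤ)) y, pfun w z)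
        * qfun w (y + 1)) atTop (𝓝 ((rho w y / qfun w (y + 1) - 0) * qfun w (y + 1))) :=
    ((tendsto_const_nhds.sub hg).mul_const _)
  rw [sub_zero, div_mul_cancel₀ _ (qpos hw (y + 1)).ne'] at hfinal
  exact hfinal.congr fun N => (hsum_eq N).symm

end
end SP

namespace SP
variable {w : ℤ → ℝ}

section
variable (hw : GoodWeight w)
include hw

lemma pq_ratio (x : ℤ) : pfun w x / qfun w x = w (-x) / w x := by
  rw [pfun, qfun]
  rw [div_div_div_cancel_right₀]
  exact (denom_pos hw x).ne'

lemma unique_stationary (π : ℤ → ℝ) (hπ0 : ∀ x, 0 ≤ π x) (hπs : HasSum π 1)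
    (hstat : ∀ y : ℤ, ∑' x : ℤ, π x * Pker w x y = π y) : π = rho w := by
  have hπsum := hπs.summable
  have hinj : ∀ y : ℤ, Function.Injective (fun n : ℕ => y + 1 - (n : ℤ)) := by
    intro y a b h
    simp only at h
    omega
  set b : ℤ → ℕ → ℝ :=
    fun y n => π (y + 1 - n) * ∏ z ∈ Finset.Icc (y + 1 - (n : ℤ)) y, pfun w z with hbdef
  have hbnn : ∀ y n, 0 ≤ b y n := fun y n =>
    mul_nonneg (hπ0 _) (Finset.prod_nonneg fun z _ => (ppos hw z).le)
  have hbsum : ∀ y : ℤ, Summable (b y) := by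
    intro y
    refine Summable.of_nonneg_of_le (hbnn y) (fun n => ?_) (hπsum.comp_injective (hinj y))
    calc b y n ≤ π (y + 1 - n) * 1 :=
          mul_le_mul_of_nonneg_left (prod_p_le_one hw _) (hπ0 _)
      _ = π (y + 1 - n) := mul_one _
  set B : ℤ → ℝ := fun y => ∑' n : ℕ, b y n with hBdef
  have hpi_eq : ∀ y : ℤ, π y = qfun w (y + 1) * B y := by
    intro y
    have hzero : ∀ x : ℤ, x ∉ Set.range (fun n : ℕ => y + 1 - (n : ℤ)) →
        π x * Pker w x y = 0 := by
      intro x hx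
      have hgt : y + 1 < x := by
        by_contra h
        exact hx ⟨(y + 1 - x).toNat, by simp only; omega⟩
      rw [Pker, if_neg (by omega), mul_zero]
    have hhs : HasSum (fun x : ℤ => π x * Pker w x y) (qfun w (y + 1) * B y) := by
      rw [← Function.Injective.hasSum_iff (hinj y) hzero]
      refine ((hbsum y).hasSum.mul_left (qfun w (y + 1))).congr_fun fun n => ?_
      simp only [Function.comp, hbdef]
      rw [Pker, if_pos (by omega)]
      ring
    rw [← hstat y, hhs.tsum_eq]
  have hBrec : ∀ y : ℤ, B y = π (y + 1) + pfun w y * B (y - 1) := by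
    intro y
    have hsplit : ∀ a : ℤ, a ≤ y →
        ∏ z ∈ Finset.Icc a y, pfun w z = (∏ z ∈ Finset.Icc a (y - 1), pfun w z) * pfun w y := by
      intro a ha
      have h := prod_Icc_succ_top' (show a ≤ (y - 1) + 1 by omega) (pfun w)
      rw [show y - 1 + 1 = y by ring] at h
      exact h
    have h0 : b y 0 = π (y + 1) := by
      simp only [hbdef]
      rw [show y + 1 - ((0 : ℕ) : ℤ) = y + 1 by simp,
        Finset.Icc_eq_empty (by omega : ¬ (y + 1 ≤ y)), Finset.prod_empty, mul_one]
    have hstep : ∀ n : ℕ, b y (n + 1) = pfun w y * b (y - 1) n := by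
      intro n
      simp only [hbdef]
      rw [show y + 1 - ((n + 1 : ℕ) : ℤ) = y - n by push_cast; ring,
        show y - 1 + 1 - (n : ℤ) = y - n by ring,
        hsplit (y - n) (by omega)]
      ring
    calc B y = b y 0 + ∑' n : ℕ, b y (n + 1) := (hbsum y).tsum_eq_zero_add
      _ = π (y + 1) + ∑' n : ℕ, pfun w y * b (y - 1) n := by rw [h0]; congr 1; exact tsum_congr hstep
      _ = π (y + 1) + pfun w y * B (y - 1) := by rw [tsum_mul_left]
  have hkey : ∀ y : ℤ, π y / qfun w (y + 1) = π (y + 1) + pfun w y * (π (y - 1) / qfun w y) := by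
    intro y
    have h1 : B y = π y / qfun w (y + 1) := by
      rw [hpi_eq y, mul_div_cancel_left₀ _ (qpos hw (y + 1)).ne']
    have h2 : B (y - 1) = π (y - 1) / qfun w y := by
      rw [hpi_eq (y - 1), show y - 1 + 1 = y by ring, mul_div_cancel_left₀ _ (qpos hw y).ne']
    rw [← h1, ← h2, hBrec y]
  have hCstep : ∀ y : ℤ, π (y + 1) - pfun w (y + 1) / qfun w (y + 1) * π y
      = π y - pfun w y / qfun w y * π (y - 1) := by
    intro y
    have hk := hkey y
    have hpq := pq_sum hw (y + 1)
    have hq1 := (qpos hw (y + 1)).ne'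
    have hq0 := (qpos hw y).ne'
    field_simp at hk ⊢
    linear_combination -hk - π y * qfun w y * hpq
  set Cf : ℤ → ℝ := fun y => π (y + 1) - pfun w (y + 1) / qfun w (y + 1) * π y with hCfdef
  have hCstep' : ∀ y : ℤ, Cf y = Cf (y - 1) := by
    intro y
    simp only [hCfdef]
    rw [show y - 1 + 1 = y by ring]
    exact hCstep y
  have hCconst : ∀ y : ℤ, Cf y = Cf 0 := by
    intro y
    induction y using Int.induction_on with
    | zero => rfl
    | succ k ih =>
      rw [← ih]
      have := hCstep' ((k : ℤ) + 1)
      rw [show (k : ℤ) + 1 - 1 = (k : ℤ) by ring] at this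
      exact this
    | pred k ih =>
      rw [← ih]
      exact (hCstep' (-(k : ℤ))).symm
  have hC0 : Cf 0 = 0 := by
    have hbound : ∀ n : ℕ, |Cf 0| ≤ π ((n : ℤ) + 1) + π (n : ℤ) := by
      intro n
      rw [← hCconst n]
      have ht0 : 0 ≤ pfun w ((n : ℤ) + 1) / qfun w ((n : ℤ) + 1) :=
        (div_pos (ppos hw _) (qpos hw _)).le
      have ht1 : pfun w ((n : ℤ) + 1) / qfun w ((n : ℤ) + 1) ≤ 1 := by
        rw [pq_ratio hw, div_le_one (hw.1 _)]
        exact wmono hw (by omega)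
      have ha := hπ0 ((n : ℤ) + 1)
      have hb := hπ0 (n : ℤ)
      rw [abs_le]
      constructor
      · simp only [hCfdef]
        nlinarith
      · simp only [hCfdef]
        nlinarith
    have htend : Tendsto (fun n : ℕ => π ((n : ℤ) + 1) + π (n : ℤ)) atTop (𝓝 (0 + 0)) := by
      have h1 : Tendsto (fun n : ℕ => π (n : ℤ)) atTop (𝓝 0) :=
        (hπsum.comp_injective (fun a b h => by simp only at h; omega : Function.Injective
          (fun n : ℕ => (n : ℤ)))).tendsto_atTop_zero
      have h2 : Tendsto (fun n : ℕ => π ((n : ℤ) + 1)) atTop (𝓝 0) :=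
        (hπsum.comp_injective (fun a b h => by simp only at h; omega : Function.Injective
          (fun n : ℕ => (n : ℤ) + 1))).tendsto_atTop_zero
      exact h2.add h1
    rw [add_zero] at htend
    have habs : |Cf 0| ≤ 0 := ge_of_tendsto' htend hbound
    exact abs_eq_zero.mp (le_antisymm habs (abs_nonneg _))
  have hratio : ∀ y : ℤ, π (y + 1) * w (y + 1) = π y * w (-(y + 1)) := by
    intro y
    have h := hCconst y
    rw [hC0] at h
    have h2 : π (y + 1) = pfun w (y + 1) / qfun w (y + 1) * π y := by
      simp only [hCfdef] at h
      linarith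
    have hwy1 := (hw.1 (y + 1)).ne'
    rw [h2, pq_ratio hw]
    field_simp
  have hR0 : rho w 0 = (Zconst w)⁻¹ := by
    rw [rho_of_nonneg hw le_rfl, R]
    rw [Finset.Icc_eq_empty (by omega : ¬ ((1 : ℤ) ≤ 0)), Finset.prod_empty, mul_one]
  have hsc : ∀ x : ℤ, π x = π 0 * Zconst w * rho w x := by
    intro x
    induction x using Int.induction_on with
    | zero =>
      rw [hR0, mul_assoc, mul_inv_cancel₀ (Zpos hw).ne', mul_one]
    | succ k ih =>
      have h1 := hratio (k : ℤ)
      have h2 := rho_ratio hw (k : ℤ)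
      have hwne := (hw.1 ((k : ℤ) + 1)).ne'
      apply mul_right_cancel₀ hwne
      rw [h1, ih]
      linear_combination (-(π 0 * Zconst w)) * h2
    | pred k ih =>
      have h1 := hratio (-(k : ℤ) - 1)
      have h2 := rho_ratio hw (-(k : ℤ) - 1)
      rw [show -(k : ℤ) - 1 + 1 = -(k : ℤ) by ring] at h1 h2
      apply mul_right_cancel₀ (show w (- -(k : ℤ)) ≠ 0 from (hw.1 _).ne')
      rw [← h1, ih]
      linear_combination (π 0 * Zconst w) * h2
  have hc1 : π 0 * Zconst w = 1 := by
    have hhs : HasSum (fun x : ℤ => π 0 * Zconst w * rho w x) (π 0 * Zconst w * 1) :=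
      (hasSum_rho hw).mul_left _
    have hps : HasSum π (π 0 * Zconst w * 1) := hhs.congr_fun fun x => hsc x
    have h3 : π 0 * Zconst w * 1 = 1 := hps.unique hπs
    rw [mul_one] at h3
    exact h3
  funext x
  rw [hsc x, hc1, one_mul]

end
end SP


/-- `Z < ∞`, `ρ` is a probability distribution on `ℤ`, it is stationary
for the kernel `P`, and it is the unique stationary probability distribution. -/
theorem stmt_1 (w : ℤ → ℝ) (hw : GoodWeight w) :
    Summable (fun x : ℕ => ∏ z ∈ Finset.Icc (1 : ℤ) (x : ℤ), w (-z) / w z) ∧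
    HasSum (rho w) 1 ∧
    (∀ y : ℤ, ∑' x : ℤ, rho w x * Pker w x y = rho w y) ∧
    (∀ π : ℤ → ℝ, (∀ x, 0 ≤ π x) → HasSum π 1 →
      (∀ y : ℤ, ∑' x : ℤ, π x * Pker w x y = π y) → π = rho w) := by
  exact ⟨SP.summable_r hw, SP.hasSum_rho hw, fun y => (SP.stationary hw y).tsum_eq,
    fun π h0 hs hst => SP.unique_stationary hw π h0 hs hst⟩
end
end

section
/- There exist constants C < ∞ and β > 0 (depending only on w) such that for all m ∈ ℕ and all y ∈ ℤ, Pᵐ(0,y) ≤ C·e^{−β|y|}, where Pᵐ denotes the m-step transition kernel. Moreover, for all n ∈ ℕ and y ∈ ℤ one has the bound Pⁿ(0,y) ≤ ρ(y)/ρ(0) = ∏_{z=1}^{⌊|2y+1|/2⌋} w(−z)/w(z). -/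
open MeasureTheory Filter
open scoped BigOperators ENNReal

noncomputable section

def gfun (w : ℤ → ℝ) (x : ℤ) : ℝ := ∏ z ∈ Finset.Icc (1:ℤ) (|2*x+1|/2), w (-z) / w z

namespace Aux
variable {w : ℤ → ℝ}

lemma nval (x : ℤ) : |2*x+1|/2 = if 0 ≤ x then x else -x-1 := by
  rcases le_or_gt 0 x with h | h
  · rw [abs_of_nonneg (by omega), if_pos h]; omega
  · rw [abs_of_nonpos (by omega), if_neg (not_le.2 h)]; omega

lemma hmono (hw : GoodWeight w) : Monotone w := monotone_int_of_le_succ hw.2.1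

lemma hD (hw : GoodWeight w) (x : ℤ) : 0 < w x + w (-x) := by
  have := hw.1 x; have := hw.1 (-x); linarith

lemma p_pos (hw : GoodWeight w) (x : ℤ) : 0 < pfun w x :=
  div_pos (hw.1 _) (hD hw x)
lemma q_pos (hw : GoodWeight w) (x : ℤ) : 0 < qfun w x :=
  div_pos (hw.1 _) (hD hw x)
lemma p_le_one (hw : GoodWeight w) (x : ℤ) : pfun w x ≤ 1 := by
  rw [pfun, div_le_one (hD hw x)]; have := hw.1 x; linarith
lemma q_le_one (hw : GoodWeight w) (x : ℤ) : qfun w x ≤ 1 := by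
  rw [qfun, div_le_one (hD hw x)]; have := hw.1 (-x); linarith
lemma pq_one (hw : GoodWeight w) (x : ℤ) : pfun w x + qfun w x = 1 := by
  rw [pfun, qfun, ← add_div, add_comm]
  exact div_self (hD hw x).ne'

lemma Pker_nonneg (hw : GoodWeight w) (x y : ℤ) : 0 ≤ Pker w x y := by
  rw [Pker]; split
  · exact mul_nonneg (Finset.prod_nonneg fun z _ => (p_pos hw z).le) (q_pos hw _).le
  · exact le_rfl

lemma Pm_nonneg (hw : GoodWeight w) : ∀ m x y, 0 ≤ Pm w m x y
  | 0, x, y => by rw [Pm]; split <;> norm_num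
  | m+1, x, y => by
      rw [Pm]
      exact tsum_nonneg fun z => mul_nonneg (Pm_nonneg hw m x z) (Pker_nonneg hw z y)

lemma icc_insert_top (b : ℤ) (hb : 0 ≤ b) (f : ℤ → ℝ) :
    ∏ z ∈ Finset.Icc (1:ℤ) (b+1), f z = (∏ z ∈ Finset.Icc (1:ℤ) b, f z) * f (b+1) := by
  have h : Finset.Icc (1:ℤ) (b+1) = insert (b+1) (Finset.Icc (1:ℤ) b) := by
    ext z; simp only [Finset.mem_Icc, Finset.mem_insert]; omega
  rw [h, Finset.prod_insert (by simp only [Finset.mem_Icc]; omega), mul_comm]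

lemma g_pos (hw : GoodWeight w) (x : ℤ) : 0 < gfun w x :=
  Finset.prod_pos fun z _ => div_pos (hw.1 _) (hw.1 _)

lemma g_zero : gfun w 0 = 1 := by
  rw [gfun]; norm_num

lemma grec (hw : GoodWeight w) (x : ℤ) :
    gfun w (x+1) * qfun w (x+1) = gfun w x * pfun w (x+1) := by
  have hD1 := (hD hw (x+1)).ne'
  have hw1 := (hw.1 (x+1)).ne'
  have hw2 := (hw.1 (-(x+1))).ne'
  rcases le_or_gt 0 x with h | h
  · have h1 : |2*(x+1)+1|/2 = x + 1 := by rw [nval]; rw [if_pos (by omega)]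
    have h2 : |2*x+1|/2 = x := by rw [nval, if_pos h]
    rw [gfun, gfun, h1, h2, icc_insert_top x h, pfun, qfun]
    set a := w (x+1) with ha
    set b := w (-(x+1)) with hb
    set G := ∏ z ∈ Finset.Icc (1:ℤ) x, w (-z) / w z with hG
    field_simp
  · rcases eq_or_lt_of_le (by omega : x ≤ -1) with h' | h'
    · subst h'
      have e0 : (-1 : ℤ) + 1 = 0 := by norm_num
      have h1 : |2*(-1:ℤ)+1|/2 = 0 := by decide
      rw [e0, g_zero, gfun, h1]
      simp [pfun, qfun, neg_zero]
    · -- x ≤ -2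
      have h1 : |2*(x+1)+1|/2 = -x-2 := by rw [nval]; rw [if_neg (by omega)]; ring
      have h2 : |2*x+1|/2 = (-x-2) + 1 := by rw [nval, if_neg (by omega)]; ring
      rw [gfun, gfun, h1, h2, icc_insert_top (-x-2) (by omega)]
      have e1 : -(-x-2+1) = x + 1 := by ring
      have e2 : (-x-2+1 : ℤ) = -(x+1) := by ring
      rw [e1, e2, pfun, qfun]
      set a := w (x+1) with ha
      set b := w (-(x+1)) with hb
      set G := ∏ z ∈ Finset.Icc (1:ℤ) (-x-2), w (-z) / w z with hG
      field_simp

lemma prod_le_pow {s : Finset ℤ} {f : ℤ → ℝ} {r : ℝ} (hr : 0 ≤ r)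
    (h0 : ∀ i ∈ s, 0 ≤ f i) (h1 : ∀ i ∈ s, f i ≤ r) :
    ∏ i ∈ s, f i ≤ r ^ s.card := by
  classical
  induction s using Finset.cons_induction with
  | empty => simp
  | cons a s ha ih =>
      rw [Finset.prod_cons, Finset.card_cons, pow_succ, mul_comm (r ^ s.card) r]
      exact mul_le_mul (h1 a (by simp)) (ih (fun i hi => h0 i (by simp [hi])) (fun i hi => h1 i (by simp [hi])))
        (Finset.prod_nonneg fun i hi => h0 i (by simp [hi])) hr

lemma ratio_le_one (hw : GoodWeight w) {z : ℤ} (hz : 1 ≤ z) : w (-z) / w z ≤ 1 :=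
  div_le_one_of_le₀ (hmono hw (by omega)) (hw.1 z).le

lemma exists_geo (hw : GoodWeight w) :
    ∃ r : ℝ, 0 < r ∧ r < 1 ∧ ∃ C0 : ℝ, 1 ≤ C0 ∧
      ∀ N : ℤ, (∏ z ∈ Finset.Icc (1:ℤ) N, w (-z) / w z) ≤ C0 * r ^ N.toNat := by
  obtain ⟨c, hc, hev⟩ := hw.2.2
  obtain ⟨z1, hz1⟩ := eventually_atTop.1 hev
  set z0 : ℤ := max z1 1 with hz0
  have hz01 : 1 ≤ z0 := le_max_right _ _
  set r : ℝ := w (-z0) / (w (-z0) + c) with hr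
  have hb0 : 0 < w (-z0) := hw.1 _
  have hbc : 0 < w (-z0) + c := by linarith
  have hr0 : 0 < r := div_pos hb0 hbc
  have hr1 : r < 1 := by rw [hr, div_lt_one hbc]; linarith
  have hratio : ∀ z : ℤ, z0 ≤ z → w (-z) / w z ≤ r := by
    intro z hz
    have h1 : c ≤ w z - w (-z) := hz1 z (le_trans (le_max_left _ _) hz)
    have h2 : w (-z) ≤ w (-z0) := hmono hw (by omega)
    have h3 : 0 < w (-z) := hw.1 _
    have h4 : 0 < w (-z) + c := by linarith
    calc w (-z) / w z ≤ w (-z) / (w (-z) + c) := by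
          apply div_le_div_of_nonneg_left h3.le h4; linarith
      _ ≤ r := by rw [hr, div_le_div_iff₀ h4 hbc]; nlinarith
  refine ⟨r, hr0, hr1, (r ^ z0.toNat)⁻¹, ?_, ?_⟩
  · rw [one_le_inv_iff₀]
    exact ⟨pow_pos hr0 _, pow_le_one₀ hr0.le hr1.le⟩
  intro N
  have hprod_le_one : ∀ M : ℤ, (∏ z ∈ Finset.Icc (1:ℤ) M, w (-z) / w z) ≤ 1 := by
    intro M
    exact Finset.prod_le_one (fun i hi => (div_pos (hw.1 _) (hw.1 _)).le)
      (fun i hi => ratio_le_one hw (Finset.mem_Icc.1 hi).1)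
  have hpow_pos : (0:ℝ) < r ^ z0.toNat := pow_pos hr0 _
  rcases le_or_gt N z0 with hN | hN
  · -- small case
    have h1 : (1:ℝ) ≤ (r ^ z0.toNat)⁻¹ * r ^ N.toNat := by
      rw [inv_mul_eq_div, le_div_iff₀ hpow_pos, one_mul]
      exact pow_le_pow_of_le_one hr0.le hr1.le (by omega)
    calc (∏ z ∈ Finset.Icc (1:ℤ) N, w (-z) / w z) ≤ 1 := hprod_le_one N
      _ ≤ (r ^ z0.toNat)⁻¹ * r ^ N.toNat := h1
  · -- N > z0
    have hsplit : Finset.Icc (1:ℤ) N = Finset.Icc 1 (z0-1) ∪ Finset.Icc z0 N := by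
      ext z; simp only [Finset.mem_Icc, Finset.mem_union]; omega
    have hdisj : Disjoint (Finset.Icc (1:ℤ) (z0-1)) (Finset.Icc z0 N) := by
      rw [Finset.disjoint_left]; intro a ha hb
      simp only [Finset.mem_Icc] at ha hb; omega
    rw [hsplit, Finset.prod_union hdisj]
    have h2 : (∏ z ∈ Finset.Icc z0 N, w (-z) / w z) ≤ r ^ (Finset.Icc z0 N).card :=
      prod_le_pow hr0.le (fun i hi => (div_pos (hw.1 _) (hw.1 _)).le)
        (fun i hi => hratio i (Finset.mem_Icc.1 hi).1)
    have hcard : (Finset.Icc z0 N).card = (N + 1 - z0).toNat := Int.card_Icc _ _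
    have h3 : r ^ (N + 1 - z0).toNat ≤ (r ^ z0.toNat)⁻¹ * r ^ N.toNat := by
      have he : (N + 1 - z0).toNat + z0.toNat = N.toNat + 1 := by omega
      rw [inv_mul_eq_div, le_div_iff₀ hpow_pos, ← pow_add, he]
      exact pow_le_pow_of_le_one hr0.le hr1.le (Nat.le_succ _)
    calc (∏ z ∈ Finset.Icc (1:ℤ) (z0-1), w (-z) / w z) * ∏ z ∈ Finset.Icc z0 N, w (-z) / w z
        ≤ 1 * r ^ (Finset.Icc z0 N).card :=
          mul_le_mul (hprod_le_one (z0-1)) h2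
            (Finset.prod_nonneg fun i hi => (div_pos (hw.1 _) (hw.1 _)).le) one_pos.le
      _ = r ^ (N + 1 - z0).toNat := by rw [one_mul, hcard]
      _ ≤ (r ^ z0.toNat)⁻¹ * r ^ N.toNat := h3
lemma key (hw : GoodWeight w) (y : ℤ) :
    HasSum (fun x : ℤ => gfun w x * Pker w x y) (gfun w y) := by
  set f : ℤ → ℝ := fun x => gfun w x * Pker w x y with hf
  have hf0 : ∀ x : ℤ, y + 1 < x → f x = 0 := by
    intro x hx
    simp only [hf, Pker, if_neg (by omega : ¬ x - 1 ≤ y), mul_zero]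
  set e : ℕ → ℤ := fun k => y + 1 - k with he
  have hinj : Function.Injective e := by intro a b hab; simp only [he] at hab; omega
  have hrange : ∀ x ∉ Set.range e, f x = 0 := by
    intro x hx
    rcases le_or_gt x (y+1) with h | h
    · exact absurd ⟨(y + 1 - x).toNat, by simp only [he]; omega⟩ hx
    · exact hf0 x h
  rw [← Function.Injective.hasSum_iff hinj hrange]
  -- now a sum over ℕ
  set u : ℕ → ℝ := fun k =>
    gfun w (y+1-k) * (∏ z ∈ Finset.Icc (y+2-(k:ℤ)) y, pfun w z) * qfun w (y+1) with hu
  have hq1 := q_pos hw (y+1)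
  have claim1 : ∀ k : ℕ, 1 ≤ k → (f ∘ e) k = u k - u (k + 1) := by
    intro k hk
    have hk1 : (1:ℤ) ≤ (k:ℤ) := by exact_mod_cast hk
    show f (y + 1 - k) = u k - u (k+1)
    have i1 : y + 2 - ((k:ℤ)) = (y + 1 - (k:ℤ)) + 1 := by ring
    have i2 : y + 1 - ((k+1:ℕ):ℤ) = (y + 1 - (k:ℤ)) - 1 := by push_cast; ring
    have i3 : y + 2 - ((k+1:ℕ):ℤ) = y + 1 - (k:ℤ) := by push_cast; ring
    simp only [hf, hu, i1, i2, i3]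
    generalize hX : y + 1 - (k:ℤ) = X
    have hxy : X ≤ y := by omega
    have hins : Finset.Icc X y = insert X (Finset.Icc (X+1) y) := by
      ext z; simp only [Finset.mem_Icc, Finset.mem_insert]; omega
    have hnotmem : X ∉ Finset.Icc (X+1) y := by simp only [Finset.mem_Icc]; omega
    rw [Pker, if_pos (by omega), hins, Finset.prod_insert hnotmem]
    have hgq : gfun w (X-1) * pfun w X = gfun w X * qfun w X := by
      have h := grec hw (X-1)
      rw [sub_add_cancel] at h
      linarith
    have hpq := pq_one hw X
    set G := gfun w X
    set Q := ∏ z ∈ Finset.Icc (X+1) y, pfun w z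
    set qy := qfun w (y+1)
    linear_combination (Q * qy) * hgq + (G * Q * qy) * hpq
  have hfe0 : (f ∘ e) 0 = gfun w (y+1) * qfun w (y+1) := by
    have h0 : e 0 = y + 1 := by simp [he]
    have hempty : Finset.Icc (y+1) y = ∅ := Finset.Icc_eq_empty (by omega)
    simp only [Function.comp, h0, hf, Pker, if_pos (by omega : y + 1 - 1 ≤ y), hempty,
      Finset.prod_empty, one_mul]
  have hu1 : u 1 = gfun w y * qfun w (y+1) := by
    have hempty : Finset.Icc (y+2-(1:ℕ):ℤ) y = ∅ := Finset.Icc_eq_empty (by push_cast; omega)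
    simp only [hu, hempty, Finset.prod_empty, mul_one]
    norm_num
  -- partial sums
  have hps : ∀ n : ℕ, 1 ≤ n → ∑ k ∈ Finset.range n, (f ∘ e) k
      = gfun w (y+1) * qfun w (y+1) + (u 1 - u n) := by
    intro n hn
    induction n with
    | zero => omega
    | succ m ih =>
        rcases Nat.eq_or_lt_of_le hn with h | h
        · rw [← h]
          simp only [Finset.sum_range_one]
          rw [hfe0]
          norm_num
        · have hm : 1 ≤ m := by omega
          rw [Finset.sum_range_succ, ih hm, claim1 m hm]
          ring
  -- u tends to 0
  obtain ⟨r, hr0, hr1, C0, hC0, hgeo⟩ := exists_geo hw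
  have hg_le : ∀ x : ℤ, gfun w x ≤ C0 * r ^ ((|2*x+1|/2).toNat) := fun x => hgeo _
  have hu_nonneg : ∀ n, 0 ≤ u n := fun n =>
    mul_nonneg (mul_nonneg (g_pos hw _).le (Finset.prod_nonneg fun z _ => (p_pos hw z).le))
      (q_pos hw _).le
  have hu_le : ∀ n : ℕ, u n ≤ gfun w (y+1-n) := by
    intro n
    calc u n ≤ gfun w (y+1-n) * 1 * 1 := by
          apply mul_le_mul
          · exact mul_le_mul_of_nonneg_left
              (Finset.prod_le_one (fun z _ => (p_pos hw z).le) (fun z _ => p_le_one hw z))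
              (g_pos hw _).le
          · exact q_le_one hw _
          · exact (q_pos hw _).le
          · exact mul_nonneg (g_pos hw _).le zero_le_one
      _ = gfun w (y+1-n) := by ring
  have hm_tendsto : Tendsto (fun n : ℕ => ((n:ℤ) - y - 2).toNat) atTop atTop := by
    rw [tendsto_atTop]
    intro K
    rw [eventually_atTop]
    exact ⟨K + (y+2).natAbs, fun n hn => by omega⟩
  have hu_tendsto : Tendsto u atTop (nhds 0) := by
    apply squeeze_zero' (Eventually.of_forall hu_nonneg)
    · show ∀ᶠ n : ℕ in atTop, u n ≤ C0 * r ^ ((((n:ℤ) - y - 2)).toNat)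
      rw [eventually_atTop]
      refine ⟨(y+2).natAbs + 2, fun n hn => ?_⟩
      have hxneg : y + 1 - (n:ℤ) < 0 := by omega
      have : (|2*(y+1-(n:ℤ))+1|/2) = (n:ℤ) - y - 2 := by
        rw [nval, if_neg (by omega)]; ring
      calc u n ≤ gfun w (y+1-n) := hu_le n
        _ ≤ C0 * r ^ ((|2*(y+1-(n:ℤ))+1|/2).toNat) := hg_le _
        _ = C0 * r ^ (((n:ℤ) - y - 2).toNat) := by rw [this]
    · rw [show (0:ℝ) = C0 * 0 by ring]
      exact (tendsto_const_nhds.mul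
        ((tendsto_pow_atTop_nhds_zero_of_lt_one hr0.le hr1).comp hm_tendsto))
  -- conclude
  have hnonneg : ∀ k : ℕ, 0 ≤ (f ∘ e) k := by
    intro k
    exact mul_nonneg (g_pos hw _).le (Pker_nonneg hw _ _)
  rw [hasSum_iff_tendsto_nat_of_nonneg hnonneg]
  have hlim : Tendsto (fun n : ℕ => gfun w (y+1) * qfun w (y+1) + (u 1 - u n)) atTop
      (nhds (gfun w (y+1) * qfun w (y+1) + (u 1 - 0))) :=
    tendsto_const_nhds.add (tendsto_const_nhds.sub hu_tendsto)
  have hval : gfun w (y+1) * qfun w (y+1) + (u 1 - 0) = gfun w y := by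
    rw [hu1]
    have h1 := grec hw y
    have h2 := pq_one hw (y+1)
    linear_combination h1 + gfun w y * h2
  rw [← hval]
  apply Tendsto.congr' _ hlim
  rw [EventuallyEq, eventually_atTop]
  exact ⟨1, fun n hn => (hps n hn).symm⟩

lemma Pm_le_g (hw : GoodWeight w) : ∀ (m : ℕ) (y : ℤ), Pm w m 0 y ≤ gfun w y := by
  intro m
  induction m with
  | zero =>
      intro y
      rw [Pm]
      split
      · next h => rw [← h, gfun]; norm_num
      · exact (g_pos hw y).le
  | succ m ih =>
      intro y
      rw [Pm]
      have hpt : ∀ x : ℤ, Pm w m 0 x * Pker w x y ≤ gfun w x * Pker w x y :=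
        fun x => mul_le_mul_of_nonneg_right (ih x) (Pker_nonneg hw x y)
      have hsum2 : Summable (fun x : ℤ => gfun w x * Pker w x y) := (key hw y).summable
      have hsum1 : Summable (fun x : ℤ => Pm w m 0 x * Pker w x y) :=
        hsum2.of_nonneg_of_le
          (fun x => mul_nonneg (Pm_nonneg hw m 0 x) (Pker_nonneg hw x y)) hpt
      calc ∑' x : ℤ, Pm w m 0 x * Pker w x y ≤ ∑' x : ℤ, gfun w x * Pker w x y :=
            Summable.tsum_le_tsum hpt hsum1 hsum2
        _ = gfun w y := (key hw y).tsum_eq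

end Aux

open Aux in
/-- uniform exponential tightness of `Pᵐ(0,·)`, and the bound
`Pⁿ(0,y) ≤ ρ(y)/ρ(0) = ∏_{z=1}^{⌊|2y+1|/2⌋} w(-z)/w(z)`. -/
theorem stmt_2 (w : ℤ → ℝ) (hw : GoodWeight w) :
    (∃ C : ℝ, ∃ β > (0 : ℝ), ∀ (m : ℕ) (y : ℤ),
      Pm w m 0 y ≤ C * Real.exp (-β * |(y : ℝ)|)) ∧
    (∀ (n : ℕ) (y : ℤ),
      Pm w n 0 y ≤ rho w y / rho w 0 ∧
      rho w y / rho w 0 = ∏ z ∈ Finset.Icc (1 : ℤ) (|2 * y + 1| / 2), w (-z) / w z) := by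
  obtain ⟨r, hr0, hr1, C0, hC0, hgeo⟩ := exists_geo hw
  -- Z is positive and finite
  have hterm_nonneg : ∀ x : ℕ, 0 ≤ ∏ z ∈ Finset.Icc (1:ℤ) (x:ℤ), w (-z) / w z :=
    fun x => Finset.prod_nonneg fun z _ => (div_pos (hw.1 _) (hw.1 _)).le
  have hZsum : Summable (fun x : ℕ => ∏ z ∈ Finset.Icc (1:ℤ) (x:ℤ), w (-z) / w z) := by
    apply Summable.of_nonneg_of_le hterm_nonneg (fun x => ?_)
      ((summable_geometric_of_lt_one hr0.le hr1).mul_left C0)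
    calc (∏ z ∈ Finset.Icc (1:ℤ) (x:ℤ), w (-z) / w z) ≤ C0 * r ^ ((x:ℤ).toNat) := hgeo _
      _ = C0 * r ^ x := by norm_num
  have hZpos : 0 < Zconst w := by
    rw [Zconst]
    have h0 : (1:ℝ) ≤ ∑' x : ℕ, ∏ z ∈ Finset.Icc (1:ℤ) (x:ℤ), w (-z) / w z := by
      have := Summable.le_tsum hZsum 0 (fun i _ => hterm_nonneg i)
      simpa using this
    linarith
  have hZinv : (Zconst w)⁻¹ ≠ 0 := inv_ne_zero hZpos.ne'
  have hrho : ∀ y : ℤ, rho w y / rho w 0 = gfun w y := by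
    intro y
    rw [rho, rho, gfun]
    have h0 : (|2*(0:ℤ)+1|/2) = 0 := by decide
    rw [h0, show Finset.Icc (1:ℤ) 0 = ∅ from Finset.Icc_eq_empty (by norm_num),
      Finset.prod_empty, mul_one]
    exact mul_div_cancel_left₀ _ hZinv
  refine ⟨?_, fun n y => ⟨by rw [hrho]; exact Pm_le_g hw n y, by rw [hrho]; rfl⟩⟩
  -- exponential bound
  refine ⟨C0 / r, -Real.log r, neg_pos.2 (Real.log_neg hr0 hr1), fun m y => ?_⟩
  have habs : |(y:ℝ)| = (y.natAbs : ℝ) := by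
    rw [Nat.cast_natAbs, Int.cast_abs]
  have hexp : (C0/r) * Real.exp (-(-Real.log r) * |(y:ℝ)|) = (C0/r) * r ^ y.natAbs := by
    rw [neg_neg, habs, mul_comm (Real.log r), Real.exp_nat_mul, Real.exp_log hr0]
  rw [hexp]
  have h1 : gfun w y ≤ C0 * r ^ ((|2*y+1|/2).toNat) := hgeo _
  have h2 : r ^ ((|2*y+1|/2).toNat) * r ≤ r ^ y.natAbs := by
    rw [← pow_succ]
    apply pow_le_pow_of_le_one hr0.le hr1.le
    rw [nval]
    split <;> omega
  calc Pm w m 0 y ≤ gfun w y := Pm_le_g hw m y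
    _ ≤ C0 * r ^ ((|2*y+1|/2).toNat) := h1
    _ = (C0 / r) * (r ^ ((|2*y+1|/2).toNat) * r) := by field_simp
    _ ≤ (C0 / r) * r ^ y.natAbs := by
        apply mul_le_mul_of_nonneg_left h2
        positivity
end
end

section
/- For every weight function w satisfying the growth condition, the stationary distribution ρ has mean −1/2: ∑_{x∈ℤ} x·ρ(x) = −1/2. -/
open MeasureTheory Filter
open scoped BigOperators ENNReal

noncomputable section

/-- the stationary distribution `ρ` has mean `-1/2`. -/
theorem stmt_4 (w : ℤ → ℝ) (hw : GoodWeight w) :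
    HasSum (fun x : ℤ => (x : ℝ) * rho w x) (-(1 / 2)) := by
  obtain ⟨hpos, hstep, c, hc, hev⟩ := hw
  have hmono : Monotone w := monotone_int_of_le_succ hstep
  obtain ⟨Z0, hZ0⟩ := eventually_atTop.mp hev
  -- the sequence a
  set a : ℕ → ℝ := fun n => ∏ z ∈ Finset.Icc (1 : ℤ) (n : ℤ), w (-z) / w z with ha
  have hapos : ∀ n, 0 < a n := fun n =>
    Finset.prod_pos fun z _ => div_pos (hpos _) (hpos _)
  -- ratio bound
  set r : ℝ := w (-1) / (w (-1) + c) with hrdef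
  have hw1 : 0 < w (-1) := hpos _
  have hr0 : 0 < r := div_pos hw1 (by linarith)
  have hr1 : r < 1 := (div_lt_one (by linarith)).mpr (by linarith)
  have hratio : ∀ z : ℤ, Z0 ≤ z → 1 ≤ z → w (-z) / w z ≤ r := by
    intro z hz hz1
    have h1 : c ≤ w z - w (-z) := hZ0 z hz
    have h2 : 0 < w z := hpos z
    have h3 : 0 < w (-z) := hpos (-z)
    have h4 : w (-z) ≤ w (-1) := hmono (by omega)
    rw [hrdef, div_le_div_iff₀ h2 (by linarith)]
    nlinarith
  -- product recursion
  have hstepa : ∀ n : ℕ, a (n + 1) = a n * (w (-((n : ℤ) + 1)) / w ((n : ℤ) + 1)) := by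
    intro n
    have hins : Finset.Icc (1 : ℤ) ((n : ℕ) + 1 : ℕ) =
        insert ((n : ℤ) + 1) (Finset.Icc (1 : ℤ) (n : ℤ)) := by
      ext z
      simp only [Finset.mem_Icc, Finset.mem_insert]
      push_cast
      omega
    have hnotmem : ((n : ℤ) + 1) ∉ Finset.Icc (1 : ℤ) (n : ℤ) := by
      simp [Finset.mem_Icc]
    rw [ha]
    simp only []
    rw [hins, Finset.prod_insert hnotmem, mul_comm]
  -- choose the threshold
  obtain ⟨N1, hN1⟩ := exists_nat_ge (2 * r / (1 - r))
  obtain ⟨N2, hN2⟩ := exists_nat_ge ((Z0 : ℝ) + 1)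
  set N := max N1 N2 with hN
  have hthresh : ∀ n : ℕ, N ≤ n → w (-((n : ℤ) + 1)) / w ((n : ℤ) + 1) ≤ r := by
    intro n hn
    apply hratio
    · have h2 : (N2 : ℤ) ≤ n := by exact_mod_cast le_trans (le_max_right N1 N2) hn
      have : (Z0 : ℝ) + 1 ≤ (N2 : ℝ) := hN2
      have : (Z0 : ℝ) ≤ (n : ℝ) + 1 := by
        have : (N2 : ℝ) ≤ n := by exact_mod_cast h2
        linarith
      exact_mod_cast this
    · omega
  -- summability of a
  have hsa : Summable a := by
    apply summable_of_ratio_norm_eventually_le hr1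
    filter_upwards [eventually_ge_atTop N] with n hn
    rw [Real.norm_eq_abs, Real.norm_eq_abs, abs_of_pos (hapos _), abs_of_pos (hapos _),
      hstepa n, mul_comm (a n)]
    exact mul_le_mul_of_nonneg_right (hthresh n hn) (hapos n).le
  -- summability of n * a n
  set b : ℕ → ℝ := fun n => (n : ℝ) * a n with hb
  have hsb : Summable b := by
    have hr1' : (1 + r) / 2 < 1 := by linarith
    apply summable_of_ratio_norm_eventually_le hr1'
    have h2r : 0 < 1 - r := by linarith
    filter_upwards [eventually_ge_atTop (max N (N1 + 1))] with n hn
    have hnN : N ≤ n := le_trans (le_max_left _ _) hn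
    have hnN1 : N1 + 1 ≤ n := le_trans (le_max_right _ _) hn
    have hbnn : 0 ≤ b n := mul_nonneg (Nat.cast_nonneg n) (hapos n).le
    have hbnn1 : 0 ≤ b (n + 1) := mul_nonneg (Nat.cast_nonneg _) (hapos _).le
    rw [Real.norm_eq_abs, Real.norm_eq_abs, abs_of_nonneg hbnn1, abs_of_nonneg hbnn]
    have key : ((n : ℝ) + 1) * r ≤ (1 + r) / 2 * n := by
      have hn' : 2 * r / (1 - r) ≤ (n : ℝ) :=
        le_trans hN1 (by exact_mod_cast Nat.le_of_succ_le hnN1)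
      rw [div_le_iff₀ h2r] at hn'
      nlinarith
    have h1 : a (n + 1) ≤ r * a n := by
      rw [hstepa n, mul_comm (a n)]
      exact mul_le_mul_of_nonneg_right (hthresh n hnN) (hapos n).le
    have : b (n + 1) = ((n : ℝ) + 1) * a (n + 1) := by rw [hb]; push_cast; ring
    rw [this, hb]
    calc ((n : ℝ) + 1) * a (n + 1) ≤ ((n : ℝ) + 1) * (r * a n) :=
          mul_le_mul_of_nonneg_left h1 (by positivity)
      _ = ((n : ℝ) + 1) * r * a n := by ring
      _ ≤ (1 + r) / 2 * (n : ℝ) * a n := mul_le_mul_of_nonneg_right key (hapos n).le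
      _ = (1 + r) / 2 * ((n : ℝ) * a n) := by ring
  -- the sum S
  set S : ℝ := ∑' n, a n with hSdef
  have hA : HasSum a S := hsa.hasSum
  have ha0 : a 0 = 1 := by
    rw [ha]
    simp
  have hS1 : 1 ≤ S := by
    have := Summable.le_tsum hsa 0 fun i _ => (hapos i).le
    rw [ha0] at this
    exact this
  have hS0 : S ≠ 0 := by linarith
  have hZeq : Zconst w = 2 * S := rfl
  set D : ℝ := (2 * S)⁻¹ with hD
  -- rho values
  have hrho_nat : ∀ n : ℕ, rho w (Int.ofNat n) = D * a n := by
    intro n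
    have hidx : |2 * (Int.ofNat n) + 1| / 2 = (n : ℤ) := by
      rw [Int.ofNat_eq_coe, abs_of_nonneg (by positivity)]
      omega
    rw [rho, hidx, hZeq, hD, ha]
  have hrho_neg : ∀ n : ℕ, rho w (Int.negSucc n) = D * a n := by
    intro n
    have hidx : |2 * (Int.negSucc n) + 1| / 2 = (n : ℤ) := by
      rw [Int.negSucc_eq]
      rw [abs_of_nonpos (by push_cast; omega)]
      push_cast
      omega
    rw [rho, hidx, hZeq, hD, ha]
  -- the two halves
  set f : ℕ → ℝ := fun n => ((Int.ofNat n : ℤ) : ℝ) * rho w (Int.ofNat n) with hf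
  set g : ℕ → ℝ := fun n => ((Int.negSucc n : ℤ) : ℝ) * rho w (Int.negSucc n) with hg
  set Tb : ℝ := ∑' n, b n with hTb
  have hfeq : f = fun n => D * b n := by
    funext n
    simp only [hf, hb]
    rw [hrho_nat n]
    simp only [Int.ofNat_eq_coe, Int.cast_natCast]
    ring
  have hgeq : g = fun n => -(D * (b n + a n)) := by
    funext n
    simp only [hg, hb]
    rw [hrho_neg n, Int.cast_negSucc]
    push_cast
    ring
  have hHf : HasSum f (D * Tb) := by
    rw [hfeq]; exact hsb.hasSum.mul_left D
  have hHg : HasSum g (-(D * (Tb + S))) := by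
    rw [hgeq]
    exact ((hsb.hasSum.add hA).mul_left D).neg
  have hint := hHf.int_rec hHg
  have hfun : (Int.rec f g : ℤ → ℝ) = fun x : ℤ => (x : ℝ) * rho w x := by
    funext x
    cases x <;> rfl
  rw [hfun] at hint
  convert hint using 1
  have : D * S = 1 / 2 := by
    rw [hD]
    field_simp
  linarith [this]
end
end

section
/- Assume additionally w(−1) < w(1). Let η be the Markov chain on ℤ with transition kernel P and let θ₊ := min{n ≥ 0 : η(n) ≥ 0}. Then there exists γ > 0 such that E[exp(γ·θ₊) | η(0) = −1] < ∞. -/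
open MeasureTheory Filter
open scoped BigOperators ENNReal

noncomputable section

section basics
variable {w : ℤ → ℝ} (hw : GoodWeight w)
include hw

lemma wmono : Monotone w := monotone_int_of_le_succ hw.2.1

lemma wsum_pos (x : ℤ) : 0 < w x + w (-x) := add_pos (hw.1 x) (hw.1 (-x))

lemma qfun_nonneg (x : ℤ) : 0 ≤ qfun w x :=
  div_nonneg (hw.1 x).le (wsum_pos hw x).le

lemma pfun_nonneg (x : ℤ) : 0 ≤ pfun w x :=
  div_nonneg (hw.1 (-x)).le (wsum_pos hw x).le

lemma pfun_add_qfun (x : ℤ) : pfun w x + qfun w x = 1 := by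
  have := (wsum_pos hw x).ne'
  rw [pfun, qfun, ← add_div, add_comm (w (-x))]; exact div_self this

lemma pfun_le_one (x : ℤ) : pfun w x ≤ 1 := by
  have h := pfun_add_qfun hw x
  have := qfun_nonneg hw x; linarith

lemma qfun_le_one (x : ℤ) : qfun w x ≤ 1 := by
  have h := pfun_add_qfun hw x
  have := pfun_nonneg hw x; linarith

lemma qfun_zero : qfun w 0 = 1/2 := by
  have := (hw.1 0).ne'
  simp only [qfun, neg_zero]
  rw [div_eq_iff (by nlinarith [hw.1 0])]; ring

lemma qfun_le_r {x : ℤ} (hx : x ≤ -1) : qfun w x ≤ w (-1) / (w 1 + w (-1)) := by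
  have h1 : w x ≤ w (-1) := wmono hw hx
  have h2 : w 1 ≤ w (-x) := wmono hw (by omega)
  have p1 : 0 < w x + w (-x) := wsum_pos hw x
  have p2 : 0 < w 1 + w (-1) := add_pos (hw.1 1) (hw.1 (-1))
  rw [qfun, div_le_div_iff₀ p1 p2]
  nlinarith [hw.1 x, hw.1 (-1), hw.1 1, hw.1 (-x)]

lemma Pker_nonneg (x y : ℤ) : 0 ≤ Pker w x y := by
  unfold Pker
  split
  · exact mul_nonneg (Finset.prod_nonneg fun z _ => pfun_nonneg hw z) (qfun_nonneg hw _)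
  · exact le_refl 0

omit hw in lemma Pker_down (x : ℤ) : Pker w x (x-1) = qfun w x := by
  rw [Pker, if_pos le_rfl]
  rw [Finset.Icc_eq_empty (by omega)]
  simp [sub_add_cancel]

omit hw in lemma Pker_self (x : ℤ) : Pker w x x = pfun w x * qfun w (x+1) := by
  rw [Pker, if_pos (by omega)]
  simp

omit hw in lemma Pker_split {x y : ℤ} (hxy : x ≤ y) :
    Pker w x y = pfun w x * Pker w (x+1) y := by
  rw [Pker, Pker, if_pos (by omega), if_pos (by omega)]
  have : Finset.Icc x y = insert x (Finset.Icc (x+1) y) := by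
    ext z
    simp only [Finset.mem_Icc, Finset.mem_insert]
    omega
  rw [this, Finset.prod_insert (by simp), mul_assoc]

omit hw in lemma Pker_zero {x y : ℤ} (h : y < x - 1) : Pker w x y = 0 := by
  rw [Pker, if_neg (by omega)]
end basics

/-- Weighted one-step sum over negative targets. -/
def Fw (w : ℤ → ℝ) (β : ℝ) (x : ℤ) : ℝ :=
  ∑ y ∈ Finset.Icc (x-1) (-1), Pker w x y * β ^ (-y)

section Fsec
variable {w : ℤ → ℝ} (hw : GoodWeight w) {β : ℝ} (hβ : 1 < β)

lemma Fw_rec {x : ℤ} (hx : x ≤ -1) :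
    Fw w β x = qfun w x * β ^ (1-x) + pfun w x * Fw w β (x+1) := by
  have hsplit : Finset.Icc (x-1) (-1) = insert (x-1) (Finset.Icc x (-1)) := by
    ext z; simp only [Finset.mem_Icc, Finset.mem_insert]; omega
  rw [Fw, hsplit, Finset.sum_insert (by simp)]
  rw [Pker_down, neg_sub, ]
  congr 1
  rw [Fw, add_sub_cancel_right, Finset.mul_sum]
  apply Finset.sum_congr rfl
  intro y hy
  simp only [Finset.mem_Icc] at hy
  rw [Pker_split hy.1, mul_assoc]

include hw hβ

lemma Fw_nonneg (x : ℤ) : 0 ≤ Fw w β x :=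
  Finset.sum_nonneg fun y _ => mul_nonneg (Pker_nonneg hw x y) (zpow_nonneg (by linarith) _)

lemma Fw_bound {r lam : ℝ} (hrq : ∀ x ≤ -1, qfun w x ≤ r)
    (h0 : 0 ≤ r) (hb : r * β + 1/2 ≤ lam) (hlam1 : lam < 1)
    (hb2 : r * β ^ 2 ≤ lam * (β - 1 + r)) :
    ∀ x ≤ -1, Fw w β x ≤ lam * β ^ (-x) := by
  have hβ0 : (0:ℝ) < β := by linarith
  have hlam0 : (0:ℝ) ≤ lam := by nlinarith
  have key : ∀ n : ℕ, Fw w β (-1 - n) ≤ lam * β ^ (-(-1 - (n:ℤ))) := by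
    intro n
    induction n with
    | zero =>
      have e1 : Fw w β (-1) = qfun w (-1) * β ^ (2:ℤ) + pfun w (-1) * (qfun w 0 * β ^ (1:ℤ)) := by
        rw [Fw]
        have : Finset.Icc (-1-1 : ℤ) (-1) = {-2, -1} := by decide
        rw [this, Finset.sum_insert (by decide), Finset.sum_singleton]
        rw [show (-2:ℤ) = -1 - 1 by ring, Pker_down, Pker_self]
        norm_num
        ring
      have e2 : (-1 - ((0:ℕ):ℤ)) = (-1 : ℤ) := by norm_num
      rw [e2, e1, qfun_zero hw]
      have h1 : qfun w (-1) * β ^ (2:ℤ) ≤ r * β ^ 2 := by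
        rw [show ((2:ℤ)) = ((2:ℕ):ℤ) by norm_num, zpow_natCast]
        exact mul_le_mul_of_nonneg_right (hrq (-1) le_rfl) (by positivity)
      have h2 : pfun w (-1) * (1/2 * β ^ (1:ℤ)) ≤ 1/2 * β := by
        rw [zpow_one]
        nlinarith [pfun_le_one hw (-1), pfun_nonneg hw (-1)]
      have e3 : lam * β ^ (-(-1:ℤ)) = lam * β := by norm_num
      rw [e3]
      nlinarith [hβ0]
    | succ n ih =>
      set x : ℤ := -1 - (n+1 : ℕ) with hxdef
      have hx1 : x + 1 = -1 - (n:ℕ) := by push_cast [hxdef]; ring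
      have hxle : x ≤ -1 := by omega
      rw [Fw_rec hxle, hx1]
      have hq : qfun w x ≤ r := hrq x hxle
      have hq0 := qfun_nonneg hw x
      have hq1 := qfun_le_one hw x
      have hp : pfun w x = 1 - qfun w x := by
        have := pfun_add_qfun hw x; linarith
      set C : ℝ := β ^ (-(-1 - ((n:ℕ)):ℤ)) with hCdef
      have hC0 : 0 < C := zpow_pos hβ0 _
      have hB : β ^ (-x) = β * C := by
        rw [hCdef, show (-x : ℤ) = 1 + -(-1 - (n:ℤ)) by omega, zpow_add₀ hβ0.ne', zpow_one]
      have h1x : β ^ (1 - x) = β * (β * C) := by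
        rw [sub_eq_add_neg, zpow_add₀ hβ0.ne', zpow_one, hB]
      rw [h1x, hB, hp]
      have hF0 : 0 ≤ Fw w β (-1 - (n:ℕ)) := Fw_nonneg hw hβ _
      have step1 : (1 - qfun w x) * Fw w β (-1 - (n:ℕ)) ≤ (1 - qfun w x) * (lam * C) := by
        apply mul_le_mul_of_nonneg_left ih (by linarith)
      have hmono : qfun w x * (β * β * C - lam * C) ≤ r * (β * β * C - lam * C) := by
        apply mul_le_mul_of_nonneg_right hq
        nlinarith [mul_le_mul_of_nonneg_right (show lam ≤ β*β by nlinarith) hC0.le]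
      nlinarith [mul_le_mul_of_nonneg_right hb2 hC0.le]
  intro x hx
  obtain ⟨n, hn⟩ : ∃ n : ℕ, x = -1 - (n:ℤ) := ⟨(-1 - x).toNat, by omega⟩
  rw [hn]; exact key n

end Fsec

/-- Recursive upper envelope for sums over negative paths. -/
def Hp (w : ℤ → ℝ) : ℕ → ℤ → ℝ
  | 0, _ => 1
  | n+1, a => ∑ b ∈ Finset.Icc (a-1) (-1), Pker w a b * Hp w n b

section Hpsec
variable {w : ℤ → ℝ} (hw : GoodWeight w) {β : ℝ} (hβ : 1 < β)
include hw

lemma Hp_nonneg : ∀ (n : ℕ) (a : ℤ), 0 ≤ Hp w n a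
  | 0, _ => zero_le_one
  | n+1, a => Finset.sum_nonneg fun b _ =>
      mul_nonneg (Pker_nonneg hw a b) (Hp_nonneg n b)

include hβ in
lemma Hp_bound {r lam : ℝ} (hrq : ∀ x ≤ -1, qfun w x ≤ r)
    (h0 : 0 ≤ r) (hb : r * β + 1/2 ≤ lam) (hlam1 : lam < 1)
    (hb2 : r * β ^ 2 ≤ lam * (β - 1 + r)) :
    ∀ (n : ℕ), ∀ a ≤ -1, Hp w n a ≤ lam ^ n * β ^ (-a) := by
  have hβ0 : (0:ℝ) < β := by linarith
  have hlam0 : (0:ℝ) ≤ lam := by nlinarith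
  intro n
  induction n with
  | zero =>
    intro a ha
    simp only [Hp, pow_zero, one_mul]
    calc (1:ℝ) ≤ β := hβ.le
    _ ≤ β ^ (-a) := by
        nth_rewrite 1 [show β = β ^ (1:ℤ) by rw [zpow_one]]
        apply zpow_le_zpow_right₀ hβ.le (by omega)
  | succ n ih =>
    intro a ha
    have step : Hp w (n+1) a ≤ ∑ b ∈ Finset.Icc (a-1) (-1), Pker w a b * (lam ^ n * β ^ (-b)) := by
      apply Finset.sum_le_sum
      intro b hb'
      simp only [Finset.mem_Icc] at hb'
      exact mul_le_mul_of_nonneg_left (ih b hb'.2) (Pker_nonneg hw a b)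
    apply step.trans
    have : ∑ b ∈ Finset.Icc (a-1) (-1), Pker w a b * (lam ^ n * β ^ (-b))
        = lam ^ n * Fw w β a := by
      rw [Fw, Finset.mul_sum]
      apply Finset.sum_congr rfl
      intro b _; ring
    rw [this]
    calc lam ^ n * Fw w β a ≤ lam ^ n * (lam * β ^ (-a)) :=
        mul_le_mul_of_nonneg_left (Fw_bound hw hβ hrq h0 hb hlam1 hb2 a ha) (pow_nonneg hlam0 n)
    _ = lam ^ (n+1) * β ^ (-a) := by ring

/-- Path-sum lemma: any finite collection of distinct negative paths starting at `a`
has total weight at most `Hp n a`. -/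
lemma path_sum_le (n : ℕ) : ∀ (a : ℤ), a ≤ -1 →
    ∀ s : Finset (Fin (n+1) → ℤ), (∀ x ∈ s, x 0 = a ∧ ∀ i, x i < 0) →
    ∑ x ∈ s, ∏ i : Fin n, Pker w (x i.castSucc) (x i.succ) ≤ Hp w n a := by
  induction n with
  | zero =>
    intro a ha s hs
    have hsub : s ⊆ {fun _ => a} := by
      intro x hx
      simp only [Finset.mem_singleton]
      funext i
      have : i = 0 := by ext; omega
      rw [this, (hs x hx).1]
    calc ∑ x ∈ s, ∏ i : Fin 0, Pker w (x i.castSucc) (x i.succ)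
        ≤ ∑ x ∈ ({fun _ => a} : Finset (Fin 1 → ℤ)), ∏ i : Fin 0, Pker w (x i.castSucc) (x i.succ) :=
          Finset.sum_le_sum_of_subset_of_nonneg hsub (fun x _ _ => Finset.prod_nonneg fun i _ => Pker_nonneg hw _ _)
    _ = 1 := by simp
    _ = Hp w 0 a := rfl
  | succ n ih =>
    intro a ha s hs
    classical
    set f : (Fin (n+2) → ℤ) → ℝ := fun x => ∏ i : Fin (n+1), Pker w (x i.castSucc) (x i.succ) with hf
    have hfsplit : ∀ x ∈ s, f x = Pker w a (x 1) * ∏ i : Fin n, Pker w (Fin.tail x i.castSucc) (Fin.tail x i.succ) := by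
      intro x hx
      show (∏ i : Fin (n+1), Pker w (x i.castSucc) (x i.succ)) = _
      rw [Fin.prod_univ_succ, Fin.castSucc_zero, Fin.succ_zero_eq_one, (hs x hx).1]
      congr 1
    have hfnn : ∀ x, 0 ≤ f x := fun x => Finset.prod_nonneg fun i _ => Pker_nonneg hw _ _
    -- restrict to paths with x 1 in Icc (a-1) (-1)
    set s' := s.filter (fun x => x 1 ∈ Finset.Icc (a-1) (-1)) with hs'
    have hzero : ∀ x ∈ s, x ∉ s' → f x = 0 := by
      intro x hx hnx
      have h1 : x 1 < 0 := (hs x hx).2 1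
      have : x 1 < a - 1 := by
        by_contra hcon
        apply hnx
        rw [hs', Finset.mem_filter]
        exact ⟨hx, Finset.mem_Icc.mpr ⟨by omega, by omega⟩⟩
      rw [hfsplit x hx, Pker_zero this, zero_mul]
    have hsum' : ∑ x ∈ s, f x = ∑ x ∈ s', f x := by
      symm
      apply Finset.sum_subset (Finset.filter_subset _ _) hzero
    rw [show (∑ x ∈ s, ∏ i : Fin (n+1), Pker w (x i.castSucc) (x i.succ)) = ∑ x ∈ s, f x from rfl,
        hsum']
    -- fiberwise over b = x 1
    rw [← Finset.sum_fiberwise_of_maps_to (g := fun x => x 1) (t := Finset.Icc (a-1) (-1))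
        (fun x hx => (Finset.mem_filter.mp hx).2) f]
    have hHp : Hp w (n+1) a = ∑ b ∈ Finset.Icc (a-1) (-1), Pker w a b * Hp w n b := rfl
    rw [hHp]
    apply Finset.sum_le_sum
    intro b hbmem
    have hble : b ≤ -1 := (Finset.mem_Icc.mp hbmem).2
    set fib := s'.filter (fun x => x 1 = b) with hfib
    have hmem : ∀ x ∈ fib, x ∈ s ∧ x 1 = b ∧ x 0 = a := by
      intro x hx
      rw [hfib, Finset.mem_filter] at hx
      have hxs : x ∈ s := (Finset.mem_filter.mp hx.1).1
      exact ⟨hxs, hx.2, (hs x hxs).1⟩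
    have heq : ∑ x ∈ fib, f x
        = Pker w a b * ∑ x ∈ fib, ∏ i : Fin n, Pker w (Fin.tail x i.castSucc) (Fin.tail x i.succ) := by
      rw [Finset.mul_sum]
      apply Finset.sum_congr rfl
      intro x hx
      rw [hfsplit x (hmem x hx).1, (hmem x hx).2.1]
    rw [heq]
    apply mul_le_mul_of_nonneg_left _ (Pker_nonneg hw a b)
    have hinj : ∀ x ∈ fib, ∀ y ∈ fib, Fin.tail x = Fin.tail y → x = y := by
      intro x hx y hy hxy
      have := Fin.cons_self_tail x
      rw [← Fin.cons_self_tail x, ← Fin.cons_self_tail y, hxy,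
        (hmem x hx).2.2, (hmem y hy).2.2]
    have himg := Finset.sum_image (s := fib) (g := Fin.tail)
      (f := fun y => ∏ i : Fin n, Pker w (y i.castSucc) (y i.succ)) hinj
    rw [← himg]
    apply ih b hble
    intro y hy
    rw [Finset.mem_image] at hy
    obtain ⟨x, hx, rfl⟩ := hy
    refine ⟨(hmem x hx).2.1, fun i => (hs x (hmem x hx).1).2 i.succ⟩
end Hpsec

section measlem
variable {w : ℤ → ℝ} (hw : GoodWeight w)
  {Ω : Type*} [MeasurableSpace Ω] {μ : Measure Ω}
  {η : ℕ → Ω → ℤ} (hη : KChain μ (Pker w) η (-1))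
include hw hη

lemma measure_neg_le (k : ℕ) :
    μ {ω | ∀ m ≤ k, η m ω < 0} ≤ ENNReal.ofReal (Hp w k (-1)) := by
  classical
  set ext : (Fin (k+1) → ℤ) → ℕ → ℤ := fun x i => if h : i < k+1 then x ⟨i, h⟩ else 0 with hext
  have hsub : {ω | ∀ m ≤ k, η m ω < 0} ⊆
      ⋃ x : {x : Fin (k+1) → ℤ // ∀ i, x i < 0}, {ω | ∀ i ≤ k, η i ω = ext x.1 i} := by
    intro ω hω
    refine Set.mem_iUnion.mpr ⟨⟨fun i => η i ω, fun i => hω i (by omega)⟩, ?_⟩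
    intro i hi
    simp only [hext]
    rw [dif_pos (by omega)]
  refine (measure_mono hsub).trans ((measure_iUnion_le _).trans ?_)
  set g : {x : Fin (k+1) → ℤ // ∀ i, x i < 0} → ℝ := fun x =>
    (if ext x.1 0 = -1 then (1:ℝ) else 0) * ∏ i ∈ Finset.range k, Pker w (ext x.1 i) (ext x.1 (i+1))
    with hg
  have hcyl : ∀ x : {x : Fin (k+1) → ℤ // ∀ i, x i < 0},
      μ {ω | ∀ i ≤ k, η i ω = ext x.1 i} = ENNReal.ofReal (g x) := fun x => hη.2 k (ext x.1)
  have hgnn : ∀ x, 0 ≤ g x := by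
    intro x
    apply mul_nonneg
    · split <;> norm_num
    · exact Finset.prod_nonneg fun i _ => Pker_nonneg hw _ _
  calc (∑' x : {x : Fin (k+1) → ℤ // ∀ i, x i < 0}, μ {ω | ∀ i ≤ k, η i ω = ext x.1 i})
      = ∑' x, ENNReal.ofReal (g x) := by
        exact tsum_congr hcyl
    _ ≤ ENNReal.ofReal (Hp w k (-1)) := by
        rw [ENNReal.tsum_eq_iSup_sum]
        apply iSup_le
        intro t
        rw [← ENNReal.ofReal_sum_of_nonneg (fun x _ => hgnn x)]
        apply ENNReal.ofReal_le_ofReal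
        -- real estimate
        set t1 := t.filter (fun x => x.1 0 = -1) with ht1
        have hstep : ∑ x ∈ t, g x = ∑ x ∈ t1, g x := by
          symm
          apply Finset.sum_subset (Finset.filter_subset _ _)
          intro x hx hnx
          have : ¬ (x.1 0 = -1) := by
            intro hc; exact hnx (Finset.mem_filter.mpr ⟨hx, hc⟩)
          have hext0 : ext x.1 0 = x.1 0 := by
            simp only [hext]; rw [dif_pos (by omega)]; rfl
          rw [hg]
          simp only [hext0, this, if_neg, if_false, zero_mul]
        rw [hstep]
        have hgval : ∀ x ∈ t1, g x = ∏ i : Fin k, Pker w (x.1 i.castSucc) (x.1 i.succ) := by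
          intro x hx
          have hx0 : x.1 0 = -1 := (Finset.mem_filter.mp hx).2
          have hext0 : ext x.1 0 = x.1 0 := by
            simp only [hext]; rw [dif_pos (by omega)]; rfl
          rw [hg]
          simp only [hext0, hx0, if_pos, one_mul]
          rw [← Fin.prod_univ_eq_prod_range (fun i => Pker w (ext x.1 i) (ext x.1 (i+1))) k]
          apply Finset.prod_congr rfl
          intro i _
          have h1 : ext x.1 i.val = x.1 i.castSucc := by
            simp only [hext]
            rw [dif_pos (Nat.lt_succ_of_lt i.isLt)]
            congr 1
          have h2 : ext x.1 (i.val+1) = x.1 i.succ := by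
            simp only [hext]
            rw [dif_pos (by omega)]
            congr 1
          rw [h1, h2]
        rw [Finset.sum_congr rfl hgval]
        have hinj : ∀ x ∈ t1, ∀ y ∈ t1, x.1 = y.1 → x = y := fun x _ y _ h => Subtype.ext h
        rw [← Finset.sum_image (s := t1) (g := Subtype.val)
          (f := fun y => ∏ i : Fin k, Pker w (y i.castSucc) (y i.succ)) hinj]
        apply path_sum_le hw k (-1) le_rfl
        intro y hy
        rw [Finset.mem_image] at hy
        obtain ⟨x, hx, rfl⟩ := hy
        exact ⟨(Finset.mem_filter.mp hx).2, x.2⟩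

lemma measure_start_zero : μ {ω | 0 ≤ η 0 ω} = 0 := by
  have hsub : {ω | 0 ≤ η 0 ω} ⊆ ⋃ b : ℕ, {ω | ∀ i ≤ 0, η i ω = (fun _ => (b:ℤ)) i} := by
    intro ω hω
    refine Set.mem_iUnion.mpr ⟨(η 0 ω).toNat, ?_⟩
    intro i hi
    have : i = 0 := by omega
    subst this
    simp [Int.toNat_of_nonneg hω]
  refine le_antisymm ((measure_mono hsub).trans ((measure_iUnion_le _).trans ?_)) (zero_le)
  have : ∀ b : ℕ, μ {ω | ∀ i ≤ 0, η i ω = (fun _ => (b:ℤ)) i} = 0 := by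
    intro b
    rw [hη.2 0 (fun _ => (b:ℤ))]
    have : ((b:ℤ) = -1) = False := by
      simp only [eq_iff_iff, iff_false]
      omega
    simp [this]
  rw [tsum_congr this]
  simp
end measlem

/-- under the extra assumption `w(-1) < w(1)`, the hitting time
`θ₊ := min{n ≥ 0 : η(n) ≥ 0}` of the Markov chain `η` with kernel `P` started at `-1`
has a finite exponential moment. -/
theorem stmt_6 (w : ℤ → ℝ) (hw : GoodWeight w) (hw1 : w (-1) < w 1)
    {Ω : Type*} [MeasurableSpace Ω] (μ : Measure Ω) [IsProbabilityMeasure μ]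
    (η : ℕ → Ω → ℤ) (hη : KChain μ (Pker w) η (-1)) :
    ∃ γ > (0 : ℝ),
      (∑' n : ℕ, ENNReal.ofReal (Real.exp (γ * n)) *
          μ {ω | 0 ≤ η n ω ∧ ∀ m < n, η m ω < 0}) +
        ⊤ * μ {ω | ∀ n, η n ω < 0} < ⊤ := by
  have hwp1 : 0 < w 1 := hw.1 1
  have hwp2 : 0 < w (-1) := hw.1 (-1)
  have hsum : 0 < w 1 + w (-1) := by linarith
  set r : ℝ := w (-1) / (w 1 + w (-1)) with hrdef
  have hr0 : 0 < r := div_pos hwp2 hsum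
  have hr2 : r < 1/2 := by
    rw [hrdef, div_lt_iff₀ hsum]; linarith
  set β : ℝ := (2*r+1)/(4*r) with hβdef
  have hβ1 : (1:ℝ) < β := by
    rw [hβdef, lt_div_iff₀ (by positivity)]; linarith
  have hrβ : r * β = (2*r+1)/4 := by
    rw [hβdef]; field_simp
  have hden : 0 < β - 1 + r := by linarith
  set lam : ℝ := max (r*β^2/(β-1+r)) (r*β+1/2) with hlamdef
  have hb' : r*β + 1/2 ≤ lam := le_max_right _ _
  have hb2' : r*β^2 ≤ lam*(β-1+r) := by
    have h := le_max_left (r*β^2/(β-1+r)) (r*β+1/2)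
    rw [← hlamdef] at h
    calc r*β^2 = (r*β^2/(β-1+r)) * (β-1+r) := by field_simp
    _ ≤ lam * (β-1+r) := mul_le_mul_of_nonneg_right h hden.le
  have hlam0 : 0 < lam := lt_of_lt_of_le (by nlinarith) hb'
  have hlam1 : lam < 1 := by
    rw [hlamdef]
    apply max_lt
    · have hβr : β * (4*r) = 2*r+1 := by rw [hβdef]; field_simp
      have h16 : (0:ℝ) < 16*r^2 := by positivity
      rw [div_lt_one hden, ← mul_lt_mul_iff_of_pos_right h16]
      have e1 : r*β^2 * (16*r^2) = r * (β*(4*r))^2 := by ring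
      have e2 : (β-1+r) * (16*r^2) = 4*r*(β*(4*r)) - 16*r^2 + 16*r^3 := by ring
      rw [e1, e2, hβr]
      nlinarith [mul_pos hr0 (mul_pos (show (0:ℝ)<1-2*r by linarith) (show (0:ℝ)<1-2*r by linarith))]
    · linarith [hrβ, hr2]
  have hrq : ∀ x ≤ -1, qfun w x ≤ r := fun x hx => qfun_le_r hw hx
  -- measure bound for staying negative k+1 steps
  have hEbound : ∀ k : ℕ, μ {ω | ∀ m ≤ k, η m ω < 0} ≤ ENNReal.ofReal (lam ^ k * β) := by
    intro k
    refine (measure_neg_le hw hη k).trans (ENNReal.ofReal_le_ofReal ?_)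
    have := Hp_bound hw hβ1 hrq hr0.le hb' hlam1 hb2' k (-1) le_rfl
    rwa [neg_neg, zpow_one] at this
  -- choose γ
  set γ : ℝ := -Real.log lam / 2 with hγdef
  have hloglam : Real.log lam < 0 := Real.log_neg hlam0 hlam1
  have hγ0 : 0 < γ := by rw [hγdef]; linarith
  refine ⟨γ, hγ0, ?_⟩
  set ρ : ℝ := Real.exp γ * lam with hρdef
  have hρ0 : 0 ≤ ρ := mul_nonneg (Real.exp_nonneg _) hlam0.le
  have hρ1 : ρ < 1 := by
    have : ρ = Real.exp (Real.log lam / 2) := by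
      rw [hρdef, hγdef]
      nth_rewrite 2 [← Real.exp_log hlam0]
      rw [← Real.exp_add]
      congr 1
      ring
    rw [this]
    exact Real.exp_lt_one_iff.mpr (by linarith)
  -- termwise bound
  set c : ℝ := β/lam with hcdef
  have hc0 : 0 ≤ c := by positivity
  have hterm : ∀ n : ℕ, ENNReal.ofReal (Real.exp (γ * n)) *
      μ {ω | 0 ≤ η n ω ∧ ∀ m < n, η m ω < 0} ≤ ENNReal.ofReal (c * ρ ^ n) := by
    intro n
    cases n with
    | zero =>
      have hzero : μ {ω | 0 ≤ η 0 ω ∧ ∀ m < 0, η m ω < 0} = 0 := by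
        refine le_antisymm (le_trans (measure_mono ?_) (measure_start_zero hw hη).le) (zero_le)
        intro ω hω; exact hω.1
      rw [hzero, mul_zero]
      exact zero_le
    | succ k =>
      have hsub : {ω | 0 ≤ η (k+1) ω ∧ ∀ m < k+1, η m ω < 0} ⊆ {ω | ∀ m ≤ k, η m ω < 0} := by
        intro ω hω m hm
        exact hω.2 m (by omega)
      have h1 : μ {ω | 0 ≤ η (k+1) ω ∧ ∀ m < k+1, η m ω < 0} ≤ ENNReal.ofReal (lam ^ k * β) :=
        (measure_mono hsub).trans (hEbound k)
      calc ENNReal.ofReal (Real.exp (γ * (k+1:ℕ))) * μ {ω | 0 ≤ η (k+1) ω ∧ ∀ m < k+1, η m ω < 0}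
          ≤ ENNReal.ofReal (Real.exp (γ * (k+1:ℕ))) * ENNReal.ofReal (lam ^ k * β) :=
            mul_le_mul_right h1 _
        _ = ENNReal.ofReal (Real.exp (γ * (k+1:ℕ)) * (lam ^ k * β)) := by
            rw [ENNReal.ofReal_mul (Real.exp_nonneg _)]
        _ = ENNReal.ofReal (c * ρ ^ (k+1)) := by
            congr 1
            rw [hρdef, hcdef, mul_pow, mul_comm γ ((k+1:ℕ):ℝ), Real.exp_nat_mul]
            have : lam ^ (k+1) = lam ^ k * lam := pow_succ lam k
            rw [this]
            field_simp
  -- second summand vanishes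
  have hA0 : μ {ω | ∀ n, η n ω < 0} = 0 := by
    have hle : ∀ k : ℕ, μ {ω | ∀ n, η n ω < 0} ≤ ENNReal.ofReal (lam ^ k * β) := by
      intro k
      refine (measure_mono ?_).trans (hEbound k)
      intro ω hω m _; exact hω m
    have htend : Tendsto (fun k : ℕ => ENNReal.ofReal (lam ^ k * β)) atTop (nhds 0) := by
      have hreal : Tendsto (fun k : ℕ => lam ^ k * β) atTop (nhds 0) := by
        have := (tendsto_pow_atTop_nhds_zero_of_lt_one hlam0.le hlam1).mul_const β
        simpa using this
      have := ENNReal.tendsto_ofReal hreal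
      simpa using this
    exact le_antisymm (ge_of_tendsto' htend hle) (zero_le)
  rw [hA0, mul_zero, add_zero]
  calc (∑' n : ℕ, ENNReal.ofReal (Real.exp (γ * n)) *
          μ {ω | 0 ≤ η n ω ∧ ∀ m < n, η m ω < 0})
      ≤ ∑' n : ℕ, ENNReal.ofReal (c * ρ ^ n) := ENNReal.tsum_le_tsum hterm
    _ = ENNReal.ofReal c * ∑' n : ℕ, (ENNReal.ofReal ρ) ^ n := by
        rw [← ENNReal.tsum_mul_left]
        apply tsum_congr
        intro n
        rw [← ENNReal.ofReal_pow hρ0, ← ENNReal.ofReal_mul hc0]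
    _ = ENNReal.ofReal c * (1 - ENNReal.ofReal ρ)⁻¹ := by rw [ENNReal.tsum_geometric]
    _ < ⊤ := by
        apply ENNReal.mul_lt_top ENNReal.ofReal_lt_top
        rw [ENNReal.inv_lt_top]
        exact tsub_pos_of_lt (ENNReal.ofReal_lt_one.mpr hρ1)
end
end

section
/- Let η be the Markov chain on ℤ with transition kernel P started at η(0) = −1, and let θ₊ := min{n ≥ 0 : η(n) ≥ 0}. Then the random variables θ₊ and η(θ₊) are independent, and for every γ > 0 and every y ≥ 0: E[exp(γ·θ₊)·1{η(θ₊)=y} | η(0)=−1] = (P(0,y)/(1−P(0,−1)))·E[exp(γ·θ₊) | η(0)=−1] (both sides being possibly +∞). -/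
open MeasureTheory Filter
open scoped BigOperators ENNReal

noncomputable section

namespace S9


variable {w : ℤ → ℝ}

section basic
variable (hw : GoodWeight w)
include hw

lemma wpos (z : ℤ) : 0 < w z := hw.1 z
lemma wmono : Monotone w := monotone_int_of_le_succ hw.2.1
lemma wsum_pos (x : ℤ) : 0 < w x + w (-x) := by linarith [wpos hw x, wpos hw (-x)]

lemma p_pos (x : ℤ) : 0 < pfun w x := div_pos (wpos hw _) (wsum_pos hw x)
lemma p_lt_one (x : ℤ) : pfun w x < 1 := by
  rw [pfun, div_lt_one (wsum_pos hw x)]; linarith [wpos hw x]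
lemma p_le_one (x : ℤ) : pfun w x ≤ 1 := (p_lt_one hw x).le
lemma p_nonneg (x : ℤ) : 0 ≤ pfun w x := (p_pos hw x).le
lemma q_pos (x : ℤ) : 0 < qfun w x := div_pos (wpos hw _) (wsum_pos hw x)
lemma q_nonneg (x : ℤ) : 0 ≤ qfun w x := (q_pos hw x).le
lemma p_add_q (x : ℤ) : pfun w x + qfun w x = 1 := by
  rw [pfun, qfun, ← add_div]
  rw [show w (-x) + w x = w x + w (-x) from by ring, div_self (wsum_pos hw x).ne']
lemma q_eq (x : ℤ) : qfun w x = 1 - pfun w x := by linarith [p_add_q hw x]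
lemma p_ge_half (x : ℤ) (hx : x ≤ 0) : 1/2 ≤ pfun w x := by
  have h1 : w x ≤ w (-x) := wmono hw (by omega)
  rw [pfun, le_div_iff₀ (wsum_pos hw x)]; linarith [wpos hw x]
lemma q_le_one (x : ℤ) : qfun w x ≤ 1 := by
  rw [q_eq hw]; linarith [p_pos hw x]

lemma Pker_nonneg (x y : ℤ) : 0 ≤ Pker w x y := by
  rw [Pker]; split
  · exact mul_nonneg (Finset.prod_nonneg fun z _ => p_nonneg hw z) (q_nonneg hw _)
  · exact le_refl 0

omit hw in
lemma Pker_eq_zero {x y : ℤ} (h : y < x - 1) : Pker w x y = 0 := by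
  rw [Pker, if_neg (by omega)]

end basic

def Tprod (w : ℤ → ℝ) (x : ℤ) (k : ℕ) : ℝ := ∏ j ∈ Finset.range k, pfun w (x + j)

section basic2
variable (hw : GoodWeight w)
include hw

lemma Tprod_succ (x : ℤ) (k : ℕ) : Tprod w x (k+1) = Tprod w x k * pfun w (x + k) :=
  Finset.prod_range_succ _ _

lemma Icc_prod_eq_Tprod (x : ℤ) (k : ℕ) :
    (∏ z ∈ Finset.Icc x (x - 1 + k), pfun w z) = Tprod w x k := by
  induction k with
  | zero => simp [Tprod, Finset.Icc_eq_empty_of_lt (by omega : x - 1 + (0:ℕ) < x)]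
  | succ n ih =>
      have h1 : Finset.Icc x (x - 1 + (n+1 : ℕ)) = insert (x + n) (Finset.Icc x (x - 1 + n)) := by
        ext z; simp only [Finset.mem_Icc, Finset.mem_insert]; omega
      rw [h1, Finset.prod_insert (by simp only [Finset.mem_Icc]; omega), Tprod_succ hw, ih]
      ring

lemma Pker_eq_T (x : ℤ) (k : ℕ) :
    Pker w x (x - 1 + k) = Tprod w x k - Tprod w x (k + 1) := by
  rw [Pker, if_pos (by omega), Icc_prod_eq_Tprod hw, Tprod_succ hw]
  have : (x - 1 + (k:ℤ)) + 1 = x + k := by ring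
  rw [this, q_eq hw]; ring

lemma Tprod_nonneg (x : ℤ) (k : ℕ) : 0 ≤ Tprod w x k :=
  Finset.prod_nonneg fun z _ => p_nonneg hw _
lemma Tprod_le_one (x : ℤ) (k : ℕ) : Tprod w x k ≤ 1 :=
  Finset.prod_le_one (fun z _ => p_nonneg hw _) (fun z _ => p_le_one hw _)
lemma Tprod_anti (x : ℤ) (k : ℕ) : Tprod w x (k+1) ≤ Tprod w x k := by
  rw [Tprod_succ hw]
  nlinarith [Tprod_nonneg hw x k, p_le_one hw (x + k), p_nonneg hw (x+k), Tprod_le_one hw x k]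

/-- factorization `P(x,y) = C(x) P(0,y)` for `x ≤ 0 ≤ y`. -/
lemma Pker_factor {x y : ℤ} (hx : x ≤ 0) (hy : 0 ≤ y) :
    Pker w x y = (∏ z ∈ Finset.Icc x (-1), pfun w z) * Pker w 0 y := by
  have h1 : Finset.Icc x y = Finset.Icc x (-1) ∪ Finset.Icc 0 y := by
    ext z; simp [Finset.mem_Icc, Finset.mem_union]; omega
  rw [Pker, if_pos (by omega), Pker, if_pos (by omega), h1,
    Finset.prod_union (by rw [Finset.disjoint_left]; intro a ha hb; simp [Finset.mem_Icc] at *; omega)]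
  ring

end basic2
/-- bundled drift constants -/
structure C9 (w : ℤ → ℝ) : Type where
  N : ℕ
  δ : ℝ
  θ : ℝ
  hN : 1 ≤ N
  hδ0 : 0 < δ
  hδ2 : δ < 1/2
  hfar : ∀ z : ℤ, z ≤ -(N:ℤ) → 1/2 + δ ≤ pfun w z
  hθ0 : 0 < θ
  hθ1 : θ < 1
  hright : ∀ z : ℤ, (N:ℤ) ≤ z → pfun w z ≤ θ

lemma exists_C9 (hw : GoodWeight w) : Nonempty (C9 w) := by
  obtain ⟨c, hc, hev⟩ := hw.2.2
  rw [eventually_atTop] at hev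
  obtain ⟨N₀, hN₀⟩ := hev
  set N : ℕ := N₀.toNat + 1 with hNdef
  have hNN : N₀ ≤ (N:ℤ) := by simp [hNdef]; omega
  have w0 : 0 < w 0 := wpos hw 0
  refine ⟨⟨N, c / (2*(2*w 0 + c)), w 0 / (2*w 0 + c), le_add_self, ?_, ?_, ?_, ?_, ?_, ?_⟩⟩
  · positivity
  · rw [div_lt_iff₀ (by positivity)]; linarith
  · intro z hz
    have h1 : c ≤ w (-z) - w (- -z) := hN₀ (-z) (by omega)
    rw [neg_neg] at h1
    have ha : w z ≤ w 0 := wmono hw (by omega)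
    have hap : 0 < w z := wpos hw z
    rw [pfun, le_div_iff₀ (wsum_pos hw z)]
    have hD : (0:ℝ) < 2*(2*w 0 + c) := by positivity
    have key : c / (2*(2*w 0 + c)) * (w z + w (-z)) ≤ (w (-z) - w z)/2 := by
      rw [div_mul_eq_mul_div, div_le_div_iff₀ hD (by norm_num : (0:ℝ) < 2)]
      linarith [mul_le_mul_of_nonneg_left h1 w0.le, mul_le_mul_of_nonneg_left ha hc.le]
    linarith
  · positivity
  · rw [div_lt_one (by positivity)]; linarith
  · intro z hz
    have h1 : c ≤ w z - w (-z) := hN₀ z (by omega)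
    have hb : w (-z) ≤ w 0 := wmono hw (by omega)
    have hbp : 0 < w (-z) := wpos hw (-z)
    rw [pfun, div_le_div_iff₀ (wsum_pos hw z) (by positivity)]
    nlinarith [mul_le_mul_of_nonneg_left hb hc.le]
lemma abel_id (T : ℕ → ℝ) (t : ℝ) (ht : 0 < t) (K : ℕ) :
    ∑ k ∈ Finset.range (K+1), (T k - T (k+1)) * t ^ (1-(k:ℤ)) =
      t * T 0 - T (K+1) * t ^ (-(K:ℤ)) -
        (t-1) * ∑ k ∈ Finset.range (K+1), T (k+1) * t ^ (-(k:ℤ)) := by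
  induction K with
  | zero => simp; ring
  | succ K ih =>
      rw [Finset.sum_range_succ, ih, Finset.sum_range_succ (fun k => T (k+1) * t ^ (-(k:ℤ))) (K+1)]
      have e1 : (1 - ((K:ℕ)+1:ℕ) : ℤ) = -(K:ℤ) := by push_cast; ring
      have e2 : t ^ (-(((K:ℕ)+1:ℕ)) : ℤ) = t ^ (-(K:ℤ)) / t := by
        have : (-(((K:ℕ)+1:ℕ)) : ℤ) = -(K:ℤ) - 1 := by push_cast; ring
        rw [this, zpow_sub_one₀ ht.ne']; ring
      rw [e1, e2]
      field_simp
      ring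

lemma sum_Icc_int (f : ℤ → ℝ) (a b : ℤ) :
    ∑ y ∈ Finset.Icc a b, f y = ∑ k ∈ Finset.range ((b+1-a).toNat), f (a + k) := by
  refine Finset.sum_nbij' (fun y => (y - a).toNat) (fun k => a + k) ?_ ?_ ?_ ?_ ?_
  all_goals
    intros
    simp_all [Finset.mem_Icc, Finset.mem_range]
    try omega

lemma exists_lyap (hw : GoodWeight w) : ∃ t lam : ℝ, 1 < t ∧ 0 ≤ lam ∧ lam < 1 ∧
    ∀ x : ℤ, x ≤ -1 → ∑ y ∈ Finset.Icc (x-1) (-1), Pker w x y * t ^ (-y) ≤ lam * t ^ (-x) := by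
  obtain ⟨C⟩ := exists_C9 hw
  obtain ⟨ρ, hρ0, hρh, hρ1, hfarρ⟩ : ∃ ρ:ℝ, 0 < ρ ∧ 1/2 < ρ ∧ ρ < 1 ∧
      ∀ z:ℤ, z ≤ -(C.N:ℤ) → ρ ≤ pfun w z :=
    ⟨1/2 + C.δ, by linarith [C.hδ0], by linarith [C.hδ0], by linarith [C.hδ2],
      fun z hz => C.hfar z hz⟩
  obtain ⟨L, ε, hL1, hε0, hLε, hLdef⟩ : ∃ L ε:ℝ, 1 < L ∧ 0 < ε ∧ L = 1 + 2*ε ∧ L = ρ/(1-ρ) := by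
    refine ⟨ρ/(1-ρ), (ρ/(1-ρ)-1)/2, ?_, ?_, by ring, rfl⟩
    · rw [lt_div_iff₀ (by linarith)]; linarith
    · have h : 1 < ρ/(1-ρ) := by rw [lt_div_iff₀ (by linarith)]; linarith
      linarith
  have htend : Tendsto (fun n : ℕ => ρ^n) atTop (nhds 0) :=
    tendsto_pow_atTop_nhds_zero_of_lt_one hρ0.le hρ1
  have hev : ∀ᶠ n : ℕ in atTop, ρ^n < ε/L := htend.eventually_lt_const (by positivity)
  obtain ⟨M₀, hM₀⟩ := eventually_atTop.1 hev
  obtain ⟨M, hM1, hM⟩ : ∃ M : ℕ, 1 ≤ M ∧ ρ ^ M ≤ ε / L :=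
    ⟨max M₀ 1, le_max_right _ _, (hM₀ _ (le_max_left _ _)).le⟩
  have hMpos : (0:ℝ) < M := by exact_mod_cast hM1
  have hsumM : 1 + ε ≤ ∑ k ∈ Finset.range M, ρ ^ (k+1) := by
    have hgs : ∑ k ∈ Finset.range M, ρ^k = (ρ^M - 1)/(ρ - 1) := geom_sum_eq (by linarith) M
    have h1 : ∑ k ∈ Finset.range M, ρ ^ (k+1) = ρ * ((ρ^M - 1)/(ρ - 1)) := by
      rw [← hgs, Finset.mul_sum]
      exact Finset.sum_congr rfl fun k _ => by ring
    have hd1 : ρ - 1 ≠ 0 := sub_ne_zero.2 hρ1.ne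
    have hd2 : 1 - ρ ≠ 0 := sub_ne_zero.2 hρ1.ne'
    have h2 : ρ * ((ρ^M - 1)/(ρ - 1)) = L * (1 - ρ^M) := by
      rw [hLdef]; field_simp; ring
    have h3 : L * (ρ^M) ≤ ε := by
      calc L * ρ^M ≤ L * (ε/L) := mul_le_mul_of_nonneg_left hM (by linarith)
        _ = ε := by field_simp
    rw [h1, h2]; nlinarith
  obtain ⟨Rn, hRndef⟩ : ∃ Rn : ℕ, Rn = C.N + M := ⟨_, rfl⟩
  obtain ⟨ρ₀, hρ₀0, hρ₀1, hρ₀le⟩ : ∃ ρ₀:ℝ, 0 < ρ₀ ∧ ρ₀ ≤ 1/2 ∧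
      ∀ k:ℕ, k ≤ Rn → ρ₀ ≤ (1/2:ℝ)^(k+1) := by
    refine ⟨(1/2)^(Rn+1), by positivity, ?_, fun k hk => ?_⟩
    · calc ((1:ℝ)/2)^(Rn+1) ≤ (1/2)^1 :=
          pow_le_pow_of_le_one (by norm_num) (by norm_num) (by omega)
      _ = 1/2 := pow_one _
    · exact pow_le_pow_of_le_one (by norm_num) (by norm_num) (by omega)
  obtain ⟨ν, hν0, hν1, hν2⟩ : ∃ ν:ℝ, 0 < ν ∧ ν*(2*(1+ε)*M) ≤ ε ∧ ν*(2*(1+ρ₀*Rn)) ≤ ρ₀ := by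
    have hRnn : (0:ℝ) ≤ ρ₀ * Rn := by positivity
    refine ⟨min (ε/(2*(1+ε)*M)) (ρ₀/(2*(1+ρ₀*Rn))), lt_min (by positivity) (by positivity),
      ?_, ?_⟩
    · rw [← le_div_iff₀ (by positivity)]; exact min_le_left _ _
    · rw [← le_div_iff₀ (by positivity)]; exact min_le_right _ _
  obtain ⟨t, htdef⟩ : ∃ t:ℝ, t = 1+ν := ⟨_, rfl⟩
  have ht1 : 1 < t := by rw [htdef]; linarith
  have ht0 : 0 < t := by linarith
  have hexp : ∀ m : ℕ, 1 - m*ν ≤ t ^ (-(m:ℤ)) := by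
    intro m
    have h1 : t ^ m ≤ Real.exp (m*ν) := by
      calc t^m ≤ (Real.exp ν)^m :=
            pow_le_pow_left₀ ht0.le (by rw [htdef]; linarith [Real.add_one_le_exp ν]) m
        _ = Real.exp (m*ν) := by rw [← Real.exp_nat_mul]
    have h2 : t ^ (-(m:ℤ)) = (t^m)⁻¹ := by rw [zpow_neg, zpow_natCast]
    have h3 : Real.exp (-(m*ν)) ≤ (t^m)⁻¹ := by
      rw [Real.exp_neg]
      exact inv_anti₀ (by positivity) h1
    rw [h2]
    calc 1 - m*ν ≤ Real.exp (-(m*ν)) := by linarith [Real.add_one_le_exp (-(m*ν))]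
      _ ≤ (t^m)⁻¹ := h3
  obtain ⟨lam, hlama, hlamb, hlam0, hlam1⟩ :
      ∃ lam:ℝ, 1-ν*ε/2 ≤ lam ∧ 1-ρ₀/2 ≤ lam ∧ 0 ≤ lam ∧ lam < 1 := by
    refine ⟨max (1-ν*ε/2) (1-ρ₀/2), le_max_left _ _, le_max_right _ _,
      le_trans (by linarith) (le_max_right _ _), max_lt (by nlinarith) (by linarith)⟩
  refine ⟨t, lam, ht1, hlam0, hlam1, ?_⟩
  intro x hx
  obtain ⟨K, hKdef⟩ : ∃ K : ℕ, K = (-x).toNat := ⟨_, rfl⟩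
  have hKx : (K:ℤ) = -x := by omega
  have hconv : ∑ y ∈ Finset.Icc (x-1) (-1), Pker w x y * t ^ (-y)
      = ∑ k ∈ Finset.range (K+1), Pker w x (x-1+k) * t^(-(x-1+(k:ℤ))) := by
    rw [sum_Icc_int (fun y => Pker w x y * t ^ (-y)) (x-1) (-1),
      show (-1+1-(x-1)).toNat = K+1 from by omega]
  have hterm : ∀ k:ℕ, Pker w x (x-1+k) * t^(-(x-1+(k:ℤ)))
      = ((Tprod w x k - Tprod w x (k+1)) * t^(1-(k:ℤ))) * t^(-x) := by
    intro k
    rw [Pker_eq_T hw, show -(x-1+(k:ℤ)) = (1-(k:ℤ)) + (-x) by ring, zpow_add₀ ht0.ne']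
    ring
  have hT0 : Tprod w x 0 = 1 := by simp [Tprod]
  have hpowx : (0:ℝ) < t ^ (-x) := zpow_pos ht0 _
  obtain ⟨Ssum, hSdef⟩ : ∃ S:ℝ, S = ∑ k ∈ Finset.range (K+1), Tprod w x (k+1) * t ^ (-(k:ℤ)) :=
    ⟨_, rfl⟩
  have hS0 : 0 ≤ Ssum := hSdef ▸
    Finset.sum_nonneg fun k _ => mul_nonneg (Tprod_nonneg hw _ _) (zpow_pos ht0 _).le
  have key := abel_id (fun k => Tprod w x k) t ht0 K
  have hmain : ∑ y ∈ Finset.Icc (x-1) (-1), Pker w x y * t ^ (-y)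
      = (t - Tprod w x (K+1) * t^(-(K:ℤ)) - (t-1)*Ssum) * t^(-x) := by
    rw [hconv]
    calc ∑ k ∈ Finset.range (K+1), Pker w x (x-1+k) * t^(-(x-1+(k:ℤ)))
        = ∑ k ∈ Finset.range (K+1),
            ((Tprod w x k - Tprod w x (k+1)) * t^(1-(k:ℤ))) * t^(-x) :=
          Finset.sum_congr rfl fun k _ => hterm k
      _ = (∑ k ∈ Finset.range (K+1), (Tprod w x k - Tprod w x (k+1)) * t^(1-(k:ℤ))) * t^(-x) :=
          (Finset.sum_mul _ _ _).symm
      _ = (t - Tprod w x (K+1) * t^(-(K:ℤ)) - (t-1)*Ssum) * t^(-x) := by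
          rw [key, hT0, hSdef]; ring
  rw [hmain]
  refine mul_le_mul_of_nonneg_right ?_ hpowx.le
  by_cases hxR : -(Rn:ℤ) ≤ x
  · -- near case
    have hKRn : K ≤ Rn := by omega
    have hTK : ρ₀ ≤ Tprod w x (K+1) := by
      refine (hρ₀le K hKRn).trans ?_
      have h := Finset.prod_le_prod (s := Finset.range (K+1)) (f := fun _ => (1/2:ℝ))
        (g := fun j : ℕ => pfun w (x + j)) (fun j _ => by norm_num)
        (fun j hj => p_ge_half hw _ (by rw [Finset.mem_range] at hj; omega))
      simpa [Finset.prod_const, Tprod] using h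
    have htK : 1 - Rn*ν ≤ t^(-(K:ℤ)) := by
      refine le_trans ?_ (hexp K)
      have hc : (K:ℝ) ≤ Rn := by exact_mod_cast hKRn
      nlinarith
    have hTt : ρ₀*(1-Rn*ν) ≤ Tprod w x (K+1) * t^(-(K:ℤ)) := by
      calc ρ₀*(1-Rn*ν) ≤ ρ₀ * t^(-(K:ℤ)) := mul_le_mul_of_nonneg_left htK hρ₀0.le
        _ ≤ Tprod w x (K+1) * t^(-(K:ℤ)) :=
            mul_le_mul_of_nonneg_right hTK (zpow_pos ht0 _).le
    generalize hA : Tprod w x (K+1) * t^(-(K:ℤ)) = A at hTt ⊢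
    subst htdef
    linarith [hTt, mul_nonneg hν0.le hS0, hν2, hlamb]
  · -- far case
    push_neg at hxR
    have hMK : M ≤ K := by omega
    have hSM : (1+ε) * t^(-(M:ℤ)) ≤ Ssum := by
      have hstep1 : (1+ε) * t^(-(M:ℤ)) ≤ ∑ k ∈ Finset.range M, ρ^(k+1) * t^(-(M:ℤ)) := by
        rw [← Finset.sum_mul]
        exact mul_le_mul_of_nonneg_right hsumM (zpow_pos ht0 _).le
      have hstep2 : ∑ k ∈ Finset.range M, ρ^(k+1) * t^(-(M:ℤ))
          ≤ ∑ k ∈ Finset.range M, Tprod w x (k+1) * t^(-(k:ℤ)) := by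
        refine Finset.sum_le_sum fun k hk => ?_
        rw [Finset.mem_range] at hk
        have hTk : ρ^(k+1) ≤ Tprod w x (k+1) := by
          have h := Finset.prod_le_prod (s := Finset.range (k+1)) (f := fun _ => ρ)
            (g := fun j : ℕ => pfun w (x + j)) (fun j _ => by linarith)
            (fun j hj => hfarρ _ (by rw [Finset.mem_range] at hj; omega))
          simpa [Finset.prod_const, Tprod] using h
        have htk : t^(-(M:ℤ)) ≤ t^(-(k:ℤ)) := by
          apply zpow_le_zpow_right₀ ht1.le
          omega
        exact mul_le_mul hTk htk (zpow_pos ht0 _).le (Tprod_nonneg hw _ _)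
      refine (hstep1.trans hstep2).trans ?_
      rw [hSdef]
      refine Finset.sum_le_sum_of_subset_of_nonneg ?_ fun k _ _ =>
        mul_nonneg (Tprod_nonneg hw _ _) (zpow_pos ht0 _).le
      exact Finset.range_subset_range.2 (by omega)
    have htM : 1 - M*ν ≤ t^(-(M:ℤ)) := hexp M
    have hTKn : 0 ≤ Tprod w x (K+1) * t^(-(K:ℤ)) :=
      mul_nonneg (Tprod_nonneg hw _ _) (zpow_pos ht0 _).le
    generalize hA : Tprod w x (K+1) * t^(-(K:ℤ)) = A at hTKn ⊢
    generalize hB : t^(-(M:ℤ)) = B at hSM htM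
    subst htdef
    have hint1 : ν*((1+ε)*B) ≤ ν*Ssum := mul_le_mul_of_nonneg_left hSM hν0.le
    have hint2 : (ν*(1+ε))*(1-M*ν) ≤ (ν*(1+ε))*B :=
      mul_le_mul_of_nonneg_left htM (by positivity)
    have h8 : ν*(2*(1+ε)*M)*ν ≤ ε*ν := mul_le_mul_of_nonneg_right hν1 hν0.le
    linarith [hint1, hint2, h8, hTKn, hlama]
lemma tendsto_Tprod0 (hw : GoodWeight w) :
    Tendsto (fun m : ℕ => Tprod w 0 (m+1)) atTop (nhds 0) := by
  obtain ⟨C⟩ := exists_C9 hw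
  have key : ∀ m : ℕ, C.N ≤ m → Tprod w 0 (m+1) ≤ C.θ^(m+1-C.N) := by
    intro m hm
    have hsplit : (∏ j ∈ Finset.range C.N, pfun w ((0:ℤ) + j)) *
        ∏ j ∈ Finset.Ico C.N (m+1), pfun w ((0:ℤ) + j) = Tprod w 0 (m+1) :=
      Finset.prod_range_mul_prod_Ico _ (by omega)
    have h1 : ∏ j ∈ Finset.range C.N, pfun w ((0:ℤ) + j) ≤ 1 :=
      Finset.prod_le_one (fun j _ => p_nonneg hw _) (fun j _ => p_le_one hw _)
    have h2 : ∏ j ∈ Finset.Ico C.N (m+1), pfun w ((0:ℤ) + j) ≤ C.θ^(m+1-C.N) := by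
      have hle := Finset.prod_le_prod (s := Finset.Ico C.N (m+1))
        (f := fun j : ℕ => pfun w ((0:ℤ) + j)) (g := fun _ => C.θ)
        (fun j _ => p_nonneg hw _)
        (fun j hj => by
          rw [Finset.mem_Ico] at hj
          simpa using C.hright (j:ℤ) (by omega))
      rwa [Finset.prod_const, Nat.card_Ico] at hle
    have h3 : 0 ≤ ∏ j ∈ Finset.Ico C.N (m+1), pfun w ((0:ℤ) + j) :=
      Finset.prod_nonneg fun j _ => p_nonneg hw _
    calc Tprod w 0 (m+1) = _ * _ := hsplit.symm
      _ ≤ 1 * C.θ^(m+1-C.N) := mul_le_mul h1 h2 h3 zero_le_one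
      _ = C.θ^(m+1-C.N) := one_mul _
  have h4 : Tendsto (fun m : ℕ => C.θ^(m+1-C.N)) atTop (nhds 0) := by
    refine (tendsto_pow_atTop_nhds_zero_of_lt_one C.hθ0.le C.hθ1).comp ?_
    exact tendsto_atTop_atTop.2 fun b => ⟨b + C.N, fun a ha => by omega⟩
  refine squeeze_zero' ?_ ?_ h4
  · exact Eventually.of_forall fun m => Tprod_nonneg hw _ _
  · exact eventually_atTop.2 ⟨C.N, key⟩

lemma hasSum_P0 (hw : GoodWeight w) : HasSum (fun k : ℕ => Pker w 0 (k:ℤ)) (pfun w 0) := by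
  have hD : ∀ k:ℕ, Pker w 0 (k:ℤ) = Tprod w 0 (k+1) - Tprod w 0 (k+2) := by
    intro k
    have h := Pker_eq_T hw 0 (k+1)
    rw [show (0:ℤ)-1+((k+1:ℕ):ℤ) = (k:ℤ) by push_cast; ring] at h
    exact h
  rw [hasSum_iff_tendsto_nat_of_nonneg (fun k => Pker_nonneg hw _ _)]
  have heq : ∀ n : ℕ, ∑ i ∈ Finset.range n, Pker w 0 (i:ℤ)
      = Tprod w 0 1 - Tprod w 0 (n+1) := by
    intro n
    calc ∑ i ∈ Finset.range n, Pker w 0 (i:ℤ)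
        = ∑ i ∈ Finset.range n, ((fun j => Tprod w 0 (j+1)) i - (fun j => Tprod w 0 (j+1)) (i+1)) :=
          Finset.sum_congr rfl fun i _ => by simpa using hD i
      _ = Tprod w 0 1 - Tprod w 0 (n+1) := Finset.sum_range_sub' _ n
  simp_rw [heq]
  have hT1 : Tprod w 0 1 = pfun w 0 := by simp [Tprod]
  rw [hT1]
  have := (tendsto_Tprod0 hw).const_sub (pfun w 0)
  simpa using this

lemma tsum_P0 (hw : GoodWeight w) :
    ∑' k:ℕ, ENNReal.ofReal (Pker w 0 (k:ℤ)) = ENNReal.ofReal (pfun w 0) := by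
  rw [← ENNReal.ofReal_tsum_of_nonneg (fun k => Pker_nonneg hw _ _) (hasSum_P0 hw).summable,
    (hasSum_P0 hw).tsum_eq]

lemma Pker_zero_neg_one (hw : GoodWeight w) : Pker w 0 (-1) = qfun w 0 := by
  rw [Pker, if_pos (by omega), Finset.Icc_eq_empty (by omega), Finset.prod_empty, one_mul]
  norm_num

lemma denom_eq (hw : GoodWeight w) : 1 - Pker w 0 (-1) = pfun w 0 := by
  rw [Pker_zero_neg_one hw, q_eq hw]; ring
/-- weight of a finite path -/
def wgt (w : ℤ → ℝ) (n : ℕ) (v : Fin (n+1) → ℤ) : ℝ :=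
  (if v 0 = -1 then (1:ℝ) else 0) * ∏ i : Fin n, Pker w (v i.castSucc) (v i.succ)

lemma wgt_nonneg (hw : GoodWeight w) (n : ℕ) (v : Fin (n+1) → ℤ) : 0 ≤ wgt w n v := by
  apply mul_nonneg
  · split <;> norm_num
  · exact Finset.prod_nonneg fun i _ => Pker_nonneg hw _ _

/-- the path sum: measure of paths staying negative before time n with value x at n -/
def Bf (w : ℤ → ℝ) (n : ℕ) (x : ℤ) : ℝ≥0∞ :=
  ∑' v : Fin (n+1) → ℤ,
    if (∀ m : Fin n, v m.castSucc < 0) ∧ v (Fin.last n) = x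
      then ENNReal.ofReal (wgt w n v) else 0

def snocEquiv (n : ℕ) : ((Fin (n+1) → ℤ) × ℤ) ≃ (Fin (n+2) → ℤ) where
  toFun p := Fin.snoc p.1 p.2
  invFun u := (fun j => u j.castSucc, u (Fin.last (n+1)))
  left_inv p := by
    obtain ⟨v, z⟩ := p
    simp only [Prod.mk.injEq]
    exact ⟨funext fun j => Fin.snoc_castSucc _ _ j, Fin.snoc_last _ _⟩
  right_inv u := by
    funext j
    cases j using Fin.lastCases with
    | last => simp
    | cast i => simp

lemma snoc_zero' (n : ℕ) (v : Fin (n+1) → ℤ) (z : ℤ) :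
    (Fin.snoc v z : Fin (n+2) → ℤ) 0 = v 0 := by
  have h : ((0 : Fin (n+1)).castSucc) = (0 : Fin (n+2)) := Fin.castSucc_zero
  rw [← h, Fin.snoc_castSucc]

lemma wgt_snoc (w : ℤ → ℝ) (n : ℕ) (v : Fin (n+1) → ℤ) (z : ℤ) :
    wgt w (n+1) (Fin.snoc v z) = wgt w n v * Pker w (v (Fin.last n)) z := by
  unfold wgt
  rw [Fin.prod_univ_castSucc
    (fun i : Fin (n+1) => Pker w ((Fin.snoc v z : Fin (n+2) → ℤ) i.castSucc)
      ((Fin.snoc v z : Fin (n+2) → ℤ) i.succ))]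
  rw [snoc_zero' n v z]
  have h1 : ∀ i : Fin n,
      Pker w ((Fin.snoc v z : Fin (n+2) → ℤ) i.castSucc.castSucc)
        ((Fin.snoc v z : Fin (n+2) → ℤ) i.castSucc.succ)
      = Pker w (v i.castSucc) (v i.succ) := by
    intro i
    rw [Fin.snoc_castSucc, Fin.succ_castSucc, Fin.snoc_castSucc]
  have h2 : Pker w ((Fin.snoc v z : Fin (n+2) → ℤ) (Fin.last n).castSucc)
      ((Fin.snoc v z : Fin (n+2) → ℤ) (Fin.last n).succ) = Pker w (v (Fin.last n)) z := by
    rw [Fin.snoc_castSucc, Fin.succ_last, Fin.snoc_last]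
  rw [Finset.prod_congr rfl (fun i _ => h1 i), h2]
  ring

lemma tsum_group_last {n : ℕ} (F : (Fin (n+1) → ℤ) → ℝ≥0∞) :
    ∑' v : Fin (n+1) → ℤ, F v
      = ∑' (x : ℤ) (v : Fin (n+1) → ℤ), if v (Fin.last n) = x then F v else 0 := by
  rw [ENNReal.tsum_comm]
  refine tsum_congr fun v => ?_
  rw [tsum_eq_single (v (Fin.last n)) (fun x hx => if_neg fun h => hx h.symm), if_pos rfl]

lemma group_neg (n : ℕ) (g : ℤ → ℝ≥0∞) :
    (∑' v : Fin (n+1) → ℤ,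
      if (∀ m : Fin (n+1), v m < 0)
        then ENNReal.ofReal (wgt w n v) * g (v (Fin.last n)) else 0)
      = ∑' x : ℤ, if x < 0 then Bf w n x * g x else 0 := by
  rw [tsum_group_last]
  refine tsum_congr fun x => ?_
  by_cases hx : x < 0
  · rw [if_pos hx, Bf, ← ENNReal.tsum_mul_right]
    refine tsum_congr fun v => ?_
    by_cases hlast : v (Fin.last n) = x
    · have hiff : (∀ m : Fin (n+1), v m < 0) ↔ (∀ m : Fin n, v m.castSucc < 0) := by
        constructor
        · exact fun h m => h _
        · intro h m
          cases m using Fin.lastCases with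
          | last => rw [hlast]; exact hx
          | cast i => exact h i
      rw [if_pos hlast, hlast]
      by_cases hcond : ∀ m : Fin (n+1), v m < 0
      · rw [if_pos hcond, if_pos ⟨hiff.1 hcond, rfl⟩]
      · rw [if_neg hcond, if_neg (fun hc => hcond (hiff.2 hc.1)), zero_mul]
    · rw [if_neg hlast, if_neg (fun hc => hlast hc.2), zero_mul]
  · rw [if_neg hx]
    have hz : ∀ v : Fin (n+1) → ℤ, (if v (Fin.last n) = x then
        (if ∀ m : Fin (n+1), v m < 0
          then ENNReal.ofReal (wgt w n v) * g (v (Fin.last n)) else 0) else 0) = 0 := by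
      intro v
      by_cases h1 : v (Fin.last n) = x
      · rw [if_pos h1, if_neg]
        intro hall
        exact hx (h1 ▸ hall (Fin.last n))
      · rw [if_neg h1]
    calc (∑' v : Fin (n+1) → ℤ, if v (Fin.last n) = x then
        (if ∀ m : Fin (n+1), v m < 0
          then ENNReal.ofReal (wgt w n v) * g (v (Fin.last n)) else 0) else 0)
        = ∑' _ : Fin (n+1) → ℤ, (0:ℝ≥0∞) := tsum_congr hz
      _ = 0 := tsum_zero

lemma Bf_zero (x : ℤ) : Bf w 0 x = if x = -1 then 1 else 0 := by
  rw [Bf, ← (Equiv.funUnique (Fin 1) ℤ).symm.tsum_eq]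
  simp only [Equiv.funUnique_symm_apply]
  rw [tsum_eq_single x ?side]
  case side =>
    intro z hz
    rw [if_neg]
    rintro ⟨-, h2⟩
    exact hz h2
  rw [if_pos ⟨fun m => m.elim0, rfl⟩]
  unfold wgt
  split_ifs <;> simp_all

lemma Bf_rec (hw : GoodWeight w) (n : ℕ) (y : ℤ) :
    Bf w (n+1) y = ∑' x : ℤ, if x < 0 then Bf w n x * ENNReal.ofReal (Pker w x y) else 0 := by
  rw [← group_neg n (fun x => ENNReal.ofReal (Pker w x y))]
  rw [Bf, ← (snocEquiv n).tsum_eq]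
  simp only [snocEquiv, Equiv.coe_fn_mk]
  refine (ENNReal.tsum_prod (f := fun (v : Fin (n+1) → ℤ) (z : ℤ) =>
    if (∀ m : Fin (n+1), (Fin.snoc v z : Fin (n+2) → ℤ) m.castSucc < 0) ∧
        (Fin.snoc v z : Fin (n+2) → ℤ) (Fin.last (n+1)) = y
      then ENNReal.ofReal (wgt w (n+1) (Fin.snoc v z)) else 0)).trans ?_
  refine tsum_congr fun v => ?_
  rw [tsum_eq_single y ?hside]
  case hside =>
    intro z hz
    rw [if_neg]
    rintro ⟨-, h2⟩
    rw [show (Fin.snoc v z : Fin (n+2) → ℤ) (Fin.last (n+1)) = z from Fin.snoc_last _ _] at h2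
    exact hz h2
  have hcs : ∀ m : Fin (n+1), (Fin.snoc v y : Fin (n+2) → ℤ) m.castSucc = v m := fun m =>
    Fin.snoc_castSucc _ _ m
  have hls : (Fin.snoc v y : Fin (n+2) → ℤ) (Fin.last (n+1)) = y := Fin.snoc_last _ _
  have hcond : ((∀ m : Fin (n+1), (Fin.snoc v y : Fin (n+2) → ℤ) m.castSucc < 0) ∧
      (Fin.snoc v y : Fin (n+2) → ℤ) (Fin.last (n+1)) = y) ↔ (∀ m : Fin (n+1), v m < 0) := by
    constructor
    · intro h m
      have := h.1 m
      rwa [hcs] at this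
    · intro h
      exact ⟨fun m => by rw [hcs]; exact h m, hls⟩
  have hwgt : wgt w (n+1) (Fin.snoc v y) = wgt w n v * Pker w (v (Fin.last n)) y :=
    wgt_snoc w n v y
  by_cases h : ∀ m : Fin (n+1), v m < 0
  · rw [if_pos (hcond.2 h), if_pos h, hwgt,
      ENNReal.ofReal_mul (wgt_nonneg hw n v)]
  · rw [if_neg (fun hc => h (hcond.1 hc)), if_neg h]

section Meas
variable {Ω : Type*} [MeasurableSpace Ω] {μ : Measure Ω} {η : ℕ → Ω → ℤ}
variable (hη : KChain μ (Pker w) η (-1))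
include hη

lemma meas_cyl (n : ℕ) (v : Fin (n+1) → ℤ) :
    μ {ω | ∀ i : Fin (n+1), η i ω = v i} = ENNReal.ofReal (wgt w n v) := by
  have h := hη.2 n (fun i => if h : i < n+1 then v ⟨i,h⟩ else 0)
  have hset : {ω | ∀ i ≤ n, η i ω = if h : i < n+1 then v ⟨i,h⟩ else 0}
      = {ω | ∀ i : Fin (n+1), η i ω = v i} := by
    ext ω
    simp only [Set.mem_setOf_eq]
    constructor
    · intro hh i
      have := hh i.1 (by omega)
      rwa [dif_pos i.2, Fin.eta] at this
    · intro hh i hi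
      rw [dif_pos (by omega : i < n+1)]
      exact hh ⟨i, by omega⟩
  have hw0 : (if (if h : 0 < n+1 then v ⟨0,h⟩ else 0) = -1 then (1:ℝ) else 0)
      = (if v 0 = -1 then (1:ℝ) else 0) := by
    rw [dif_pos (by omega : 0 < n+1)]
    rfl
  have hprod : ∏ i ∈ Finset.range n,
      Pker w (if h : i < n+1 then v ⟨i,h⟩ else 0) (if h : i+1 < n+1 then v ⟨i+1,h⟩ else 0)
      = ∏ i : Fin n, Pker w (v i.castSucc) (v i.succ) := by
    rw [← Fin.prod_univ_eq_prod_range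
      (fun i => Pker w (if h : i < n+1 then v ⟨i,h⟩ else 0)
        (if h : i+1 < n+1 then v ⟨i+1,h⟩ else 0)) n]
    refine Finset.prod_congr rfl fun i _ => ?_
    rw [dif_pos (by omega : (i:ℕ) < n+1), dif_pos (by omega : (i:ℕ)+1 < n+1)]
    rfl
  rw [hset, hw0, hprod] at h
  exact h

open scoped Classical in
lemma meas_path (n : ℕ) (Φ : (Fin (n+1) → ℤ) → Prop) :
    μ {ω | Φ (fun i => η i ω)}
      = ∑' v : Fin (n+1) → ℤ, if Φ v then ENNReal.ofReal (wgt w n v) else 0 := by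
  classical
  set f : (Fin (n+1) → ℤ) → Set Ω :=
    fun v => if Φ v then {ω | ∀ i : Fin (n+1), η i ω = v i} else ∅ with hf
  have hdisj : Pairwise (Function.onFun Disjoint f) := by
    intro a b hab
    simp only [Function.onFun, hf]
    split_ifs <;> try simp
    rw [Set.disjoint_left]
    intro ω ha hb
    refine hab (funext fun i => ?_)
    rw [← ha i, ← hb i]
  have hmeas : ∀ v, MeasurableSet (f v) := by
    intro v
    have hfv : f v = if Φ v then {ω | ∀ i : Fin (n+1), η i ω = v i} else ∅ := rfl
    rw [hfv]
    split_ifs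
    · have : {ω | ∀ i : Fin (n+1), η i ω = v i} = ⋂ i : Fin (n+1), (η i)⁻¹' {v i} := by
        ext ω; simp [Set.mem_iInter]
      rw [this]
      exact MeasurableSet.iInter fun i => (hη.1 i) (measurableSet_singleton _)
    · exact MeasurableSet.empty
  have hunion : {ω | Φ (fun i => η i ω)} = ⋃ v, f v := by
    ext ω
    simp only [Set.mem_setOf_eq, Set.mem_iUnion, hf]
    constructor
    · intro h
      refine ⟨fun i => η i ω, ?_⟩
      rw [if_pos h]
      exact fun i => rfl
    · rintro ⟨v, hv⟩
      by_cases hΦ : Φ v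
      · rw [if_pos hΦ] at hv
        have heq : (fun i : Fin (n+1) => η i ω) = v := funext hv
        rw [heq]
        exact hΦ
      · rw [if_neg hΦ] at hv
        exact absurd hv (Set.notMem_empty ω)
  rw [hunion, measure_iUnion hdisj hmeas]
  refine tsum_congr fun v => ?_
  have hfv : f v = if Φ v then {ω | ∀ i : Fin (n+1), η i ω = v i} else ∅ := rfl
  rw [hfv]
  split_ifs with hΦ
  · exact meas_cyl hη n v
  · exact measure_empty

lemma meas_B (n : ℕ) (y : ℤ) :
    μ {ω | (∀ m < n, η m ω < 0) ∧ η n ω = y} = Bf w n y := by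
  have hset : {ω | (∀ m < n, η m ω < 0) ∧ η n ω = y}
      = {ω | (fun v : Fin (n+1) → ℤ =>
          (∀ m : Fin n, v m.castSucc < 0) ∧ v (Fin.last n) = y) (fun i => η i ω)} := by
    ext ω
    simp only [Set.mem_setOf_eq]
    constructor
    · rintro ⟨h1, h2⟩
      exact ⟨fun m => h1 m.1 m.2, h2⟩
    · rintro ⟨h1, h2⟩
      exact ⟨fun m hm => h1 ⟨m, hm⟩, h2⟩
  rw [hset]
  refine (meas_path hη n (fun v : Fin (n+1) → ℤ =>
    (∀ m : Fin n, v m.castSucc < 0) ∧ v (Fin.last n) = y)).trans ?_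
  exact tsum_congr fun v => by split_ifs <;> rfl

lemma meas_stay (n : ℕ) :
    μ {ω | ∀ i ≤ n, η i ω < 0} = ∑' x : ℤ, if x < 0 then Bf w n x else 0 := by
  have hset : {ω | ∀ i ≤ n, η i ω < 0}
      = {ω | (fun v : Fin (n+1) → ℤ => ∀ m : Fin (n+1), v m < 0) (fun i => η i ω)} := by
    ext ω
    simp only [Set.mem_setOf_eq]
    constructor
    · intro h m
      exact h m.1 (by omega)
    · intro h i hi
      exact h ⟨i, by omega⟩
  rw [hset]
  refine (meas_path hη n (fun v : Fin (n+1) → ℤ => ∀ m : Fin (n+1), v m < 0)).trans ?_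
  have := group_neg (w := w) n (fun _ => (1:ℝ≥0∞))
  simp only [mul_one] at this
  refine Eq.trans ?_ this
  exact tsum_congr fun v => by split_ifs <;> rfl

lemma measSet_B (n : ℕ) (y : ℤ) :
    MeasurableSet {ω | (∀ m < n, η m ω < 0) ∧ η n ω = y} := by
  have : {ω | (∀ m < n, η m ω < 0) ∧ η n ω = y}
      = (⋂ m, ⋂ _ : m < n, (η m)⁻¹' (Set.Iio 0)) ∩ (η n)⁻¹' {y} := by
    ext ω; simp [Set.mem_iInter]
  rw [this]
  exact MeasurableSet.inter
    (MeasurableSet.iInter fun m => MeasurableSet.iInter fun _ =>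
      (hη.1 m) MeasurableSet.of_discrete)
    ((hη.1 n) (measurableSet_singleton _))

lemma meas_a (n : ℕ) :
    μ {ω | 0 ≤ η n ω ∧ ∀ m < n, η m ω < 0} = ∑' k : ℕ, Bf w n (k:ℤ) := by
  have hset : {ω | 0 ≤ η n ω ∧ ∀ m < n, η m ω < 0}
      = ⋃ k : ℕ, {ω | (∀ m < n, η m ω < 0) ∧ η n ω = (k:ℤ)} := by
    ext ω
    simp only [Set.mem_setOf_eq, Set.mem_iUnion]
    constructor
    · rintro ⟨h1, h2⟩
      exact ⟨(η n ω).toNat, h2, by omega⟩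
    · rintro ⟨k, h1, h2⟩
      exact ⟨by omega, h1⟩
  have hd : Pairwise (Function.onFun Disjoint
      (fun k : ℕ => {ω | (∀ m < n, η m ω < 0) ∧ η n ω = (k:ℤ)})) := by
    intro a b hab
    simp only [Function.onFun]
    rw [Set.disjoint_left]
    rintro ω ⟨-, h2⟩ ⟨-, h4⟩
    rw [h2] at h4
    exact hab (by exact_mod_cast h4)
  rw [hset, measure_iUnion hd (fun k => measSet_B hη n k)]
  exact tsum_congr fun k => meas_B hη n k

end Meas
section Meas2
variable {Ω : Type*} [MeasurableSpace Ω] {μ : Measure Ω} {η : ℕ → Ω → ℤ}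

variable (hw : GoodWeight w) (hη : KChain μ (Pker w) η (-1))
include hw hη

/-- the key vanishing: the chain escapes the negatives a.s. -/
lemma never_zero [IsProbabilityMeasure μ] : μ {ω | ∀ n, η n ω < 0} = 0 := by
  obtain ⟨t, lam, ht1, hlam0, hlam1, hcore⟩ := exists_lyap hw
  have ht0 : (0:ℝ) < t := by linarith
  have hcore' : ∀ x : ℤ, x < 0 →
      (∑' y : ℤ, if y < 0 then ENNReal.ofReal (Pker w x y * t ^ (-y)) else 0)
        ≤ ENNReal.ofReal (lam * t ^ (-x)) := by
    intro x hx
    have hfin : (∑' y : ℤ, if y < 0 then ENNReal.ofReal (Pker w x y * t ^ (-y)) else 0)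
        = ∑ y ∈ Finset.Icc (x-1) (-1), (if y < 0 then ENNReal.ofReal (Pker w x y * t ^ (-y)) else 0) := by
      apply tsum_eq_sum
      intro y hy
      rw [Finset.mem_Icc] at hy
      by_cases h1 : y < 0
      · rw [if_pos h1, Pker_eq_zero (by omega), zero_mul, ENNReal.ofReal_zero]
      · rw [if_neg h1]
    rw [hfin]
    have hdrop : ∀ y ∈ Finset.Icc (x-1) (-1),
        (if y < 0 then ENNReal.ofReal (Pker w x y * t ^ (-y)) else 0)
          = ENNReal.ofReal (Pker w x y * t ^ (-y)) := by
      intro y hy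
      rw [Finset.mem_Icc] at hy
      rw [if_pos (by omega)]
    rw [Finset.sum_congr rfl hdrop,
      ← ENNReal.ofReal_sum_of_nonneg (fun y _ =>
        mul_nonneg (Pker_nonneg hw x y) (zpow_pos ht0 _).le)]
    exact ENNReal.ofReal_le_ofReal (hcore x (by omega))
  have hH : ∀ n, (∑' x : ℤ, if x < 0 then Bf w n x * ENNReal.ofReal (t ^ (-x)) else 0)
      ≤ ENNReal.ofReal lam ^ n * ENNReal.ofReal t := by
    intro n
    induction n with
    | zero =>
        have hterm : ∀ x : ℤ, (if x < 0 then Bf w 0 x * ENNReal.ofReal (t ^ (-x)) else 0)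
            = if x = -1 then ENNReal.ofReal (t^(1:ℤ)) else 0 := by
          intro x
          rw [Bf_zero]
          by_cases h : x = -1
          · subst h
            rw [if_pos (by omega), if_pos rfl, if_pos rfl, one_mul]
            norm_num
          · rw [if_neg h]
            by_cases h2 : x < 0 <;> simp [h2, h]
        rw [tsum_congr hterm, tsum_eq_single (-1) (fun x hx => if_neg hx), if_pos rfl,
          pow_zero, one_mul, zpow_one]
    | succ n ih =>
        have step1 : (∑' y : ℤ, if y < 0 then Bf w (n+1) y * ENNReal.ofReal (t ^ (-y)) else 0)
            = ∑' (y : ℤ) (x : ℤ), (if y < 0 then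
                (if x < 0 then Bf w n x * ENNReal.ofReal (Pker w x y) else 0)
                  * ENNReal.ofReal (t ^ (-y)) else 0) := by
          refine tsum_congr fun y => ?_
          by_cases hy : y < 0
          · rw [if_pos hy, Bf_rec hw, ← ENNReal.tsum_mul_right]
            exact tsum_congr fun x => by rw [if_pos hy]
          · rw [if_neg hy]
            exact (tsum_congr fun x => by rw [if_neg hy]).symm.trans tsum_zero |>.symm
        have step2 : (∑' (y : ℤ) (x : ℤ), (if y < 0 then
                (if x < 0 then Bf w n x * ENNReal.ofReal (Pker w x y) else 0)
                  * ENNReal.ofReal (t ^ (-y)) else 0))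
            = ∑' x : ℤ, (if x < 0 then Bf w n x *
                (∑' y : ℤ, if y < 0 then ENNReal.ofReal (Pker w x y * t ^ (-y)) else 0) else 0) := by
          rw [ENNReal.tsum_comm]
          refine tsum_congr fun x => ?_
          by_cases hx : x < 0
          · rw [if_pos hx, ← ENNReal.tsum_mul_left]
            refine tsum_congr fun y => ?_
            by_cases hy : y < 0
            · rw [if_pos hy, if_pos hx, if_pos hy,
                ENNReal.ofReal_mul (Pker_nonneg hw x y), mul_assoc]
            · rw [if_neg hy, if_neg hy, mul_zero]
          · refine (tsum_congr fun y => ?_).trans tsum_zero |>.trans (if_neg hx).symm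
            by_cases hy : y < 0
            · rw [if_pos hy, if_neg hx, zero_mul]
            · rw [if_neg hy]
        rw [step1, step2]
        calc (∑' x : ℤ, (if x < 0 then Bf w n x *
                (∑' y : ℤ, if y < 0 then ENNReal.ofReal (Pker w x y * t ^ (-y)) else 0) else 0))
            ≤ ∑' x : ℤ, (if x < 0 then Bf w n x * ENNReal.ofReal (lam * t ^ (-x)) else 0) := by
              refine ENNReal.tsum_le_tsum fun x => ?_
              by_cases hx : x < 0
              · rw [if_pos hx, if_pos hx]
                exact mul_le_mul_right (hcore' x hx) _
              · rw [if_neg hx]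
                exact zero_le
          _ = ENNReal.ofReal lam * ∑' x : ℤ, (if x < 0 then Bf w n x * ENNReal.ofReal (t ^ (-x)) else 0) := by
              rw [← ENNReal.tsum_mul_left]
              refine tsum_congr fun x => ?_
              by_cases hx : x < 0
              · rw [if_pos hx, if_pos hx, ENNReal.ofReal_mul hlam0]
                ring
              · rw [if_neg hx, if_neg hx, mul_zero]
          _ ≤ ENNReal.ofReal lam * (ENNReal.ofReal lam ^ n * ENNReal.ofReal t) :=
              mul_le_mul_right ih _
          _ = ENNReal.ofReal lam ^ (n+1) * ENNReal.ofReal t := by ring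
  have hstay : ∀ n, μ {ω | ∀ i ≤ n, η i ω < 0} ≤ ENNReal.ofReal lam ^ n := by
    intro n
    have h1 : ENNReal.ofReal t * μ {ω | ∀ i ≤ n, η i ω < 0}
        ≤ ENNReal.ofReal t * ENNReal.ofReal lam ^ n := by
      calc ENNReal.ofReal t * μ {ω | ∀ i ≤ n, η i ω < 0}
          = ENNReal.ofReal t * ∑' x : ℤ, (if x < 0 then Bf w n x else 0) := by
            rw [meas_stay hη n]
        _ = ∑' x : ℤ, ENNReal.ofReal t * (if x < 0 then Bf w n x else 0) :=
            ENNReal.tsum_mul_left.symm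
        _ ≤ ∑' x : ℤ, (if x < 0 then Bf w n x * ENNReal.ofReal (t ^ (-x)) else 0) := by
            refine ENNReal.tsum_le_tsum fun x => ?_
            by_cases hx : x < 0
            · rw [if_pos hx, if_pos hx, mul_comm]
              refine mul_le_mul_right (ENNReal.ofReal_le_ofReal ?_) _
              calc t = t^(1:ℤ) := (zpow_one t).symm
                _ ≤ t^(-x) := zpow_le_zpow_right₀ ht1.le (by omega)
            · rw [if_neg hx, if_neg hx, mul_zero]
        _ ≤ ENNReal.ofReal lam ^ n * ENNReal.ofReal t := hH n
        _ = ENNReal.ofReal t * ENNReal.ofReal lam ^ n := mul_comm _ _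
    exact (ENNReal.mul_le_mul_iff_right (by simp [ENNReal.ofReal_pos, ht0])
      ENNReal.ofReal_ne_top).1 h1
  have hsub : ∀ n, μ {ω | ∀ k, η k ω < 0} ≤ ENNReal.ofReal lam ^ n := fun n =>
    le_trans (measure_mono (show {ω | ∀ k, η k ω < 0} ⊆ {ω | ∀ i ≤ n, η i ω < 0} from
      fun ω h i _ => h i)) (hstay n)
  have htend : Tendsto (fun n => (ENNReal.ofReal lam)^n) atTop (nhds 0) :=
    ENNReal.tendsto_pow_atTop_nhds_zero_of_lt_one (by
      rw [← ENNReal.ofReal_one]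
      exact ENNReal.ofReal_lt_ofReal_iff_of_nonneg hlam0 |>.2 hlam1)
  exact le_antisymm (ge_of_tendsto' htend hsub) zero_le


/-- the constant `K_n` -/
def Kc (w : ℤ → ℝ) (n : ℕ) : ℝ≥0∞ :=
  ∑' x : ℤ, if x < 0 then Bf w n x * ENNReal.ofReal (∏ z ∈ Finset.Icc x (-1), pfun w z) else 0

omit hη in
lemma Bf_succ_hit (n : ℕ) {y : ℤ} (hy : 0 ≤ y) :
    Bf w (n+1) y = Kc w n * ENNReal.ofReal (Pker w 0 y) := by
  rw [Bf_rec hw, Kc, ← ENNReal.tsum_mul_right]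
  refine tsum_congr fun x => ?_
  by_cases hx : x < 0
  · rw [if_pos hx, if_pos hx, Pker_factor hw (by omega) hy,
      ENNReal.ofReal_mul (Finset.prod_nonneg fun z _ => p_nonneg hw z), mul_assoc]
  · rw [if_neg hx, if_neg hx, zero_mul]

lemma a_zero : μ {ω | 0 ≤ η 0 ω ∧ ∀ m < 0, η m ω < 0} = 0 := by
  rw [meas_a hη 0]
  refine (tsum_congr fun k => ?_).trans tsum_zero
  rw [Bf_zero, if_neg (by omega)]

lemma a_succ (n : ℕ) : μ {ω | 0 ≤ η (n+1) ω ∧ ∀ m < n+1, η m ω < 0}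
    = Kc w n * ENNReal.ofReal (pfun w 0) := by
  rw [meas_a hη (n+1)]
  calc ∑' k : ℕ, Bf w (n+1) (k:ℤ)
      = ∑' k : ℕ, Kc w n * ENNReal.ofReal (Pker w 0 (k:ℤ)) :=
        tsum_congr fun k => Bf_succ_hit hw n (by omega)
    _ = Kc w n * ∑' k : ℕ, ENNReal.ofReal (Pker w 0 (k:ℤ)) := ENNReal.tsum_mul_left
    _ = Kc w n * ENNReal.ofReal (pfun w 0) := by rw [tsum_P0 hw]

lemma Bf_eq_r_mul_a (n : ℕ) {y : ℤ} (hy : 0 ≤ y) :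
    Bf w n y = ENNReal.ofReal (Pker w 0 y / (1 - Pker w 0 (-1)))
      * μ {ω | 0 ≤ η n ω ∧ ∀ m < n, η m ω < 0} := by
  have hp0 : 0 < pfun w 0 := p_pos hw 0
  rw [denom_eq hw]
  cases n with
  | zero => rw [Bf_zero, if_neg (by omega), a_zero hw hη, mul_zero]
  | succ n =>
      rw [Bf_succ_hit hw n hy, a_succ hw hη n]
      rw [show ENNReal.ofReal (Pker w 0 y / pfun w 0) * (Kc w n * ENNReal.ofReal (pfun w 0))
        = Kc w n * (ENNReal.ofReal (Pker w 0 y / pfun w 0) * ENNReal.ofReal (pfun w 0)) by ring]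
      rw [← ENNReal.ofReal_mul (div_nonneg (Pker_nonneg hw 0 y) hp0.le),
        div_mul_cancel₀ _ hp0.ne']

lemma measSet_a (n : ℕ) : MeasurableSet {ω | 0 ≤ η n ω ∧ ∀ m < n, η m ω < 0} := by
  have : {ω | 0 ≤ η n ω ∧ ∀ m < n, η m ω < 0}
      = (η n)⁻¹' (Set.Ici 0) ∩ (⋂ m, ⋂ _ : m < n, (η m)⁻¹' (Set.Iio 0)) := by
    ext ω; simp [Set.mem_iInter]
  rw [this]
  exact MeasurableSet.inter ((hη.1 n) MeasurableSet.of_discrete)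
    (MeasurableSet.iInter fun m => MeasurableSet.iInter fun _ =>
      (hη.1 m) MeasurableSet.of_discrete)

lemma disj_a : Pairwise (Function.onFun Disjoint
    (fun n : ℕ => {ω | 0 ≤ η n ω ∧ ∀ m < n, η m ω < 0})) := by
  have key : ∀ a b : ℕ, a < b →
      Disjoint {ω | 0 ≤ η a ω ∧ ∀ m < a, η m ω < 0} {ω | 0 ≤ η b ω ∧ ∀ m < b, η m ω < 0} := by
    intro a b hab
    rw [Set.disjoint_left]
    rintro ω ⟨h1, -⟩ ⟨-, h4⟩
    exact absurd (h4 a hab) (by omega)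
  intro a b hab
  rcases hab.lt_or_gt with h | h
  · exact key a b h
  · exact (key b a h).symm

lemma sum_a_one [IsProbabilityMeasure μ] :
    ∑' n : ℕ, μ {ω | 0 ≤ η n ω ∧ ∀ m < n, η m ω < 0} = 1 := by
  have hunion : ⋃ n : ℕ, {ω | 0 ≤ η n ω ∧ ∀ m < n, η m ω < 0}
      = {ω | ∀ n, η n ω < 0}ᶜ := by
    ext ω
    simp only [Set.mem_iUnion, Set.mem_setOf_eq, Set.mem_compl_iff, not_forall, not_lt]
    constructor
    · rintro ⟨n, h1, -⟩
      exact ⟨n, h1⟩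
    · rintro ⟨n, hn⟩
      have hex : ∃ k, 0 ≤ η k ω := ⟨n, hn⟩
      exact ⟨Nat.find hex, Nat.find_spec hex, fun i hi => by
        have := Nat.find_min hex hi
        omega⟩
  have hms : MeasurableSet {ω | ∀ n, η n ω < 0} := by
    have : {ω | ∀ n, η n ω < 0} = ⋂ n, (η n)⁻¹' (Set.Iio 0) := by
      ext ω; simp [Set.mem_iInter]
    rw [this]
    exact MeasurableSet.iInter fun n => (hη.1 n) MeasurableSet.of_discrete
  rw [← measure_iUnion (disj_a hw hη) (fun n => measSet_a hw hη n), hunion,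
    prob_compl_eq_one_sub hms, never_zero hw hη, tsub_zero]

lemma ever_y [IsProbabilityMeasure μ] {y : ℤ} (hy : 0 ≤ y) :
    μ {ω | ∃ m, (0 ≤ η m ω ∧ ∀ i < m, η i ω < 0) ∧ η m ω = y}
      = ENNReal.ofReal (Pker w 0 y / (1 - Pker w 0 (-1))) := by
  have hset : {ω | ∃ m, (0 ≤ η m ω ∧ ∀ i < m, η i ω < 0) ∧ η m ω = y}
      = ⋃ n : ℕ, {ω | (∀ m < n, η m ω < 0) ∧ η n ω = y} := by
    ext ω
    simp only [Set.mem_setOf_eq, Set.mem_iUnion]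
    constructor
    · rintro ⟨m, ⟨-, h2⟩, h3⟩
      exact ⟨m, h2, h3⟩
    · rintro ⟨n, h1, h2⟩
      exact ⟨n, ⟨by omega, h1⟩, h2⟩
  have hdisj : Pairwise (Function.onFun Disjoint
      (fun n : ℕ => {ω | (∀ m < n, η m ω < 0) ∧ η n ω = y})) := by
    have key : ∀ a b : ℕ, a < b →
        Disjoint {ω | (∀ m < a, η m ω < 0) ∧ η a ω = y}
          {ω | (∀ m < b, η m ω < 0) ∧ η b ω = y} := by
      intro a b hab
      rw [Set.disjoint_left]
      rintro ω ⟨-, h2⟩ ⟨h3, -⟩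
      have := h3 a hab
      omega
    intro a b hab
    rcases hab.lt_or_gt with h | h
    · exact key a b h
    · exact (key b a h).symm
  rw [hset, measure_iUnion hdisj (fun n => measSet_B hη n y)]
  calc ∑' n : ℕ, μ {ω | (∀ m < n, η m ω < 0) ∧ η n ω = y}
      = ∑' n : ℕ, ENNReal.ofReal (Pker w 0 y / (1 - Pker w 0 (-1)))
          * μ {ω | 0 ≤ η n ω ∧ ∀ m < n, η m ω < 0} := by
        refine tsum_congr fun n => ?_
        rw [meas_B hη n y, Bf_eq_r_mul_a hw hη n hy]
    _ = ENNReal.ofReal (Pker w 0 y / (1 - Pker w 0 (-1)))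
          * ∑' n : ℕ, μ {ω | 0 ≤ η n ω ∧ ∀ m < n, η m ω < 0} := ENNReal.tsum_mul_left
    _ = ENNReal.ofReal (Pker w 0 y / (1 - Pker w 0 (-1))) := by
        rw [sum_a_one hw hη, mul_one]

lemma E1_eq (n : ℕ) {y : ℤ} (hy : 0 ≤ y) :
    {ω | (0 ≤ η n ω ∧ ∀ m < n, η m ω < 0) ∧ η n ω = y}
      = {ω | (∀ m < n, η m ω < 0) ∧ η n ω = y} := by
  ext ω
  simp only [Set.mem_setOf_eq]
  constructor
  · rintro ⟨⟨-, h2⟩, h3⟩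
    exact ⟨h2, h3⟩
  · rintro ⟨h1, h2⟩
    exact ⟨⟨by omega, h1⟩, h2⟩

end Meas2

end S9

/-- for the Markov chain `η` with kernel `P` started at `-1` and
`θ₊ := min{n ≥ 0 : η(n) ≥ 0}`, the random variables `θ₊` and `η(θ₊)` are independent, and
for every `γ > 0`, `y ≥ 0`:
`E[exp(γθ₊) 1{η(θ₊)=y}] = (P(0,y)/(1-P(0,-1))) E[exp(γθ₊)]` (both sides possibly `+∞`). -/
theorem stmt_9 (w : ℤ → ℝ) (hw : GoodWeight w)
    {Ω : Type*} [MeasurableSpace Ω] (μ : Measure Ω) [IsProbabilityMeasure μ]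
    (η : ℕ → Ω → ℤ) (hη : KChain μ (Pker w) η (-1)) :
    (∀ (n : ℕ) (y : ℤ),
      μ {ω | (0 ≤ η n ω ∧ ∀ m < n, η m ω < 0) ∧ η n ω = y} =
        μ {ω | 0 ≤ η n ω ∧ ∀ m < n, η m ω < 0} *
          μ {ω | ∃ m, (0 ≤ η m ω ∧ ∀ i < m, η i ω < 0) ∧ η m ω = y}) ∧
    (∀ γ > (0 : ℝ), ∀ y : ℤ, 0 ≤ y →
      (∑' n : ℕ, ENNReal.ofReal (Real.exp (γ * n)) *
          μ {ω | (0 ≤ η n ω ∧ ∀ m < n, η m ω < 0) ∧ η n ω = y}) =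
        ENNReal.ofReal (Pker w 0 y / (1 - Pker w 0 (-1))) *
          ((∑' n : ℕ, ENNReal.ofReal (Real.exp (γ * n)) *
              μ {ω | 0 ≤ η n ω ∧ ∀ m < n, η m ω < 0}) +
            ⊤ * μ {ω | ∀ n, η n ω < 0})) := by
  constructor
  · intro n y
    by_cases hy : 0 ≤ y
    · rw [S9.E1_eq hw hη n hy, S9.meas_B hη n y, S9.Bf_eq_r_mul_a hw hη n hy,
        S9.ever_y hw hη hy, mul_comm]
    · have h1 : {ω | (0 ≤ η n ω ∧ ∀ m < n, η m ω < 0) ∧ η n ω = y} = (∅ : Set Ω) := by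
        ext ω
        simp only [Set.mem_setOf_eq, Set.mem_empty_iff_false, iff_false]
        rintro ⟨⟨h1, -⟩, h2⟩
        omega
      have h2 : {ω | ∃ m, (0 ≤ η m ω ∧ ∀ i < m, η i ω < 0) ∧ η m ω = y} = (∅ : Set Ω) := by
        ext ω
        simp only [Set.mem_setOf_eq, Set.mem_empty_iff_false, iff_false]
        rintro ⟨m, ⟨h1, -⟩, h2⟩
        omega
      rw [h1, h2, measure_empty, mul_zero]
  · intro γ hγ y hy
    rw [S9.never_zero hw hη, mul_zero, add_zero]
    calc (∑' n : ℕ, ENNReal.ofReal (Real.exp (γ * n)) *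
          μ {ω | (0 ≤ η n ω ∧ ∀ m < n, η m ω < 0) ∧ η n ω = y})
        = ∑' n : ℕ, ENNReal.ofReal (Pker w 0 y / (1 - Pker w 0 (-1)))
            * (ENNReal.ofReal (Real.exp (γ * n)) *
              μ {ω | 0 ≤ η n ω ∧ ∀ m < n, η m ω < 0}) := by
          refine tsum_congr fun n => ?_
          rw [S9.E1_eq hw hη n hy, S9.meas_B hη n y, S9.Bf_eq_r_mul_a hw hη n hy]
          ring
      _ = ENNReal.ofReal (Pker w 0 y / (1 - Pker w 0 (-1))) *
            ∑' n : ℕ, ENNReal.ofReal (Real.exp (γ * n)) *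
              μ {ω | 0 ≤ η n ω ∧ ∀ m < n, η m ω < 0} := ENNReal.tsum_mul_left
end
end
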